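/- The twisted twin G of the Grigorchuk group is regular branch over K; that is, X*K ≤ K and Xⁿ*K has finite index in G for every n ≥ 0. Moreover K contains the third level stabilizer Stab_G(3). -/

import Mathlib

open Equiv

/-! ## The binary rooted tree and the twisted twin of the Grigorchuk group

We identify the vertex set of the infinite rooted binary tree with `V = List Bool`
(the free monoid `X*` on `X = {0,1}`), and realize automorphisms of the tree as
permutations of `V`.  The generators `a, b, c, d` of the twisted twin `G` of the
Grigorchuk group are defined by the recursive rules
`a(xw) = (¬x)w`, `ψ(b) = (c,a)`, `ψ(c) = (a,d)`, `ψ(d) = (1,b)`. -/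

abbrev V : Type := List Bool

def actA : V → V
  | [] => []
  | x :: w => (!x) :: w

theorem actA_invol : Function.Involutive actA := fun w => by
  cases w with
  | nil => rfl
  | cons x w => simp [actA]

mutual
  def actB : V → V
    | [] => []
    | false :: w => false :: actC w
    | true :: w => true :: actA w
  def actC : V → V
    | [] => []
    | false :: w => false :: actA w
    | true :: w => true :: actD w
  def actD : V → V
    | [] => []
    | false :: w => false :: w
    | true :: w => true :: actB w
end

theorem act_invol3 (w : V) :
    actB (actB w) = w ∧ actC (actC w) = w ∧ actD (actD w) = w := by
  induction w with
  | nil => exact ⟨rfl, rfl, rfl⟩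
  | cons x w ih =>
    cases x <;>
      exact ⟨by simp [actB, actC, actD, ih.1, ih.2.1, ih.2.2, actA_invol w],
        by simp [actB, actC, actD, ih.1, ih.2.1, ih.2.2, actA_invol w],
        by simp [actB, actC, actD, ih.1, ih.2.1, ih.2.2, actA_invol w]⟩

theorem actB_invol : Function.Involutive actB := fun w => (act_invol3 w).1
theorem actC_invol : Function.Involutive actC := fun w => (act_invol3 w).2.1
theorem actD_invol : Function.Involutive actD := fun w => (act_invol3 w).2.2

/-- The generator `a`: the root swap. -/
def a : Perm V := actA_invol.toPerm actA
/-- The generator `b`, with `ψ(b) = (c, a)`. -/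
def b : Perm V := actB_invol.toPerm actB
/-- The generator `c`, with `ψ(c) = (a, d)`. -/
def c : Perm V := actC_invol.toPerm actC
/-- The generator `d`, with `ψ(d) = (1, b)`. -/
def d : Perm V := actD_invol.toPerm actD

@[simp] theorem coe_a : ⇑a = actA := rfl
@[simp] theorem coe_b : ⇑b = actB := rfl
@[simp] theorem coe_c : ⇑c = actC := rfl
@[simp] theorem coe_d : ⇑d = actD := rfl

/-- The twisted twin of the Grigorchuk group. -/
def G : Subgroup (Perm V) := Subgroup.closure {a, b, c, d}

theorem a_mem_G : a ∈ G := Subgroup.subset_closure (by simp)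
theorem b_mem_G : b ∈ G := Subgroup.subset_closure (by simp)
theorem c_mem_G : c ∈ G := Subgroup.subset_closure (by simp)
theorem d_mem_G : d ∈ G := Subgroup.subset_closure (by simp)

/-- `hasState g v s` says that the state (section) of `g` at the vertex `v` is `s`,
i.e. `g (v ++ w) = g v ++ s w` for all `w`. -/
def hasState (g : Perm V) (v : V) (s : Perm V) : Prop :=
  ∀ w : V, g (v ++ w) = g v ++ s w

def vstarFun (v : V) (f : V → V) : V → V :=
  fun w => if v <+: w then v ++ f (w.drop v.length) else w

theorem vstarFun_comp (v : V) (f f' : V → V) (w : V) :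
    vstarFun v f (vstarFun v f' w) = vstarFun v (f ∘ f') w := by
  by_cases h : v <+: w
  · obtain ⟨t, rfl⟩ := h
    simp [vstarFun, List.prefix_append, List.drop_left]
  · simp [vstarFun, h]

theorem vstarFun_id (v w : V) : vstarFun v id w = w := by
  by_cases h : v <+: w
  · obtain ⟨t, rfl⟩ := h
    simp [vstarFun, List.prefix_append, List.drop_left]
  · simp [vstarFun, h]

/-- `vstar v g` is the automorphism `v * g`, acting as `g` on the subtree rooted
at `v` and trivially elsewhere. -/
def vstar (v : V) (g : Perm V) : Perm V where
  toFun := vstarFun v g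
  invFun := vstarFun v g.symm
  left_inv := fun w => by
    rw [vstarFun_comp, Equiv.symm_comp_self]
    exact vstarFun_id v w
  right_inv := fun w => by
    rw [vstarFun_comp, Equiv.self_comp_symm]
    exact vstarFun_id v w

/-- `XstarSub n H` is the subgroup `Xⁿ * H`: the product of the copies `v * H`
over all vertices `v` of level `n` (equivalently, the subgroup they generate). -/
def XstarSub (n : ℕ) (H : Subgroup (Perm V)) : Subgroup (Perm V) :=
  Subgroup.closure {p | ∃ v : V, ∃ g : Perm V, v.length = n ∧ g ∈ H ∧ p = vstar v g}

/-- `pairPerm s₀ s₁ = ψ⁻¹(s₀, s₁)`: the first-level stabilizer element whose states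
at the vertices `0` and `1` are `s₀` and `s₁`. -/
def pairPerm (s₀ s₁ : Perm V) : Perm V := vstar [false] s₀ * vstar [true] s₁

/-- The permutations fixing every vertex of level `n`. -/
def stabLevel (n : ℕ) : Subgroup (Perm V) where
  carrier := {g : Perm V | ∀ v : V, v.length = n → g v = v}
  one_mem' := fun _ _ => rfl
  mul_mem' := by
    intro g h hg hh v hv
    show g (h v) = v
    rw [hh v hv, hg v hv]
  inv_mem' := by
    intro g hg v hv
    show g⁻¹ v = v
    conv_lhs => rw [← hg v hv]
    exact Equiv.symm_apply_apply g v

/-- The `n`-th level stabilizer `Stab_G(n)` of `G`. -/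
def stabG (n : ℕ) : Subgroup (Perm V) := G ⊓ stabLevel n

/-- The commutator `[x, y] = x⁻¹ y⁻¹ x y` (paper convention). -/
def pc (x y : Perm V) : Perm V := x⁻¹ * y⁻¹ * x * y
/-- Conjugation `xʸ = y⁻¹ x y`. -/
def cj (x y : Perm V) : Perm V := y⁻¹ * x * y

/-- The normal closure in `G` of a subset `S` of `G`. -/
def ncl (S : Set (Perm V)) : Subgroup (Perm V) :=
  Subgroup.closure {x | ∃ s ∈ S, ∃ g ∈ G, x = g⁻¹ * s * g}

/-- `K = ⟨[a,b],[b,c],[b,d],[c,d], bcd⟩^G`. -/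
def K : Subgroup (Perm V) := ncl {pc a b, pc b c, pc b d, pc c d, b * c * d}

/-- The subgroup `[K, G]`. -/
def KG : Subgroup (Perm V) := ⁅K, G⁆

/-- The subgroup `C`, generated by `[K,G]` and `[a,b][b,c]`. -/
def Csub : Subgroup (Perm V) := KG ⊔ Subgroup.closure {pc a b * pc b c}

/-- `γ_n(G)`, the `n`-th term of the lower central series of `G` (starting at `γ₁ = G`),
viewed as a subgroup of `Perm V`. -/
def gammaG (n : ℕ) : Subgroup (Perm V) :=
  Subgroup.map G.subtype ((⊤ : Subgroup ↥G).lowerCentralSeries (n - 1))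


/-! ### Word engine -/

abbrev W : Type := List (Fin 4)

def gen : Fin 4 → Perm V
  | 0 => a | 1 => b | 2 => c | 3 => d

def genAct : Fin 4 → V → V
  | 0 => actA | 1 => actB | 2 => actC | 3 => actD

theorem gen_coe (i : Fin 4) : ⇑(gen i) = genAct i := by
  fin_cases i <;> rfl

theorem genAct_invol (i : Fin 4) (v : V) : genAct i (genAct i v) = v := by
  fin_cases i
  · exact actA_invol v
  · exact (act_invol3 v).1
  · exact (act_invol3 v).2.1
  · exact (act_invol3 v).2.2

theorem gen_mul_self (i : Fin 4) : gen i * gen i = 1 :=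
  Equiv.ext fun v => by
    simp only [Perm.mul_apply, gen_coe, Perm.one_apply]; exact genAct_invol i v

theorem gen_inv (i : Fin 4) : (gen i)⁻¹ = gen i :=
  inv_eq_of_mul_eq_one_right (gen_mul_self i)

def evalW (w : W) : Perm V := (w.map gen).prod

@[simp] theorem evalW_nil : evalW [] = 1 := rfl

@[simp] theorem evalW_cons (i : Fin 4) (w : W) : evalW (i :: w) = gen i * evalW w := by
  simp [evalW]

@[simp] theorem evalW_append (u w : W) : evalW (u ++ w) = evalW u * evalW w := by
  simp [evalW]

theorem evalW_reverse (w : W) : evalW (w.reverse) = (evalW w)⁻¹ := by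
  induction w with
  | nil => simp
  | cons i w ih => simp [ih, mul_inv_rev, gen_inv]

def actW : W → V → V
  | [], v => v
  | i :: w, v => genAct i (actW w v)

theorem evalW_coe (w : W) : ⇑(evalW w) = actW w := by
  induction w with
  | nil => rfl
  | cons i w ih =>
    funext v
    simp only [evalW_cons, Perm.mul_apply, gen_coe, actW, ih]

@[simp] theorem actW_nil_vertex (w : W) : actW w [] = [] := by
  induction w with
  | nil => rfl
  | cons i w ih =>
    simp only [actW, ih]
    fin_cases i <;> rfl

theorem actW_append (u w : W) (v : V) : actW (u ++ w) v = actW u (actW w v) := by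
  induction u with
  | nil => rfl
  | cons i u ih => simp [actW, ih]

/-- level-one permutation of a generator -/
def sg : Fin 4 → Bool
  | 0 => true | _ => false

/-- state word of a generator -/
def stg : Fin 4 → Bool → W
  | 0, _ => []
  | 1, false => [2] | 1, true => [0]
  | 2, false => [0] | 2, true => [3]
  | 3, false => [] | 3, true => [1]

def sW : W → Bool := fun w => w.foldr (fun i s => xor (sg i) s) false

@[simp] theorem sW_nil : sW [] = false := rfl
@[simp] theorem sW_cons (i : Fin 4) (w : W) : sW (i :: w) = xor (sg i) (sW w) := rfl

def stW : W → Bool → W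
  | [], _ => []
  | i :: w, x => stg i (xor x (sW w)) ++ stW w x

theorem genAct_cons (i : Fin 4) (x : Bool) (v : V) :
    genAct i (x :: v) = (xor x (sg i)) :: actW (stg i x) v := by
  fin_cases i <;> cases x <;> rfl

theorem actW_cons (w : W) (x : Bool) (v : V) :
    actW w (x :: v) = (xor x (sW w)) :: actW (stW w x) v := by
  induction w with
  | nil => simp [actW, stW]
  | cons i w ih =>
    simp only [actW, ih, genAct_cons, stW, sW_cons, actW_append]
    congr 1
    cases x <;> cases sW w <;> cases sg i <;> rfl

/-! ### reduction and the fuel checker -/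

def rstep (i : Fin 4) : W → W
  | [] => [i]
  | j :: w => if i = j then w else i :: j :: w

def red (w : W) : W := w.foldr rstep []

theorem actW_rstep (i : Fin 4) (u : W) (v : V) :
    actW (rstep i u) v = genAct i (actW u v) := by
  cases u with
  | nil => rfl
  | cons j w =>
    by_cases h : i = j
    · subst h; simp only [rstep, if_pos rfl, actW]
      exact (genAct_invol i (actW w v)).symm
    · simp [rstep, if_neg h, actW]

theorem actW_red (w : W) (v : V) : actW (red w) v = actW w v := by
  induction w with
  | nil => rfl
  | cons i w ih => simp only [red, List.foldr_cons, actW_rstep, actW]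
                   rw [show w.foldr rstep [] = red w from rfl, ih]

def chkF : ℕ → W → W → Bool
  | 0, u, v => u == v
  | n + 1, u, v => u == v ||
      (sW u == sW v && chkF n (red (stW u false)) (red (stW v false))
        && chkF n (red (stW u true)) (red (stW v true)))

theorem chkF_sound : ∀ n (u v : W), chkF n u v = true → ∀ x, actW u x = actW v x := by
  intro n
  induction n with
  | zero =>
    intro u v h x
    rw [show u = v from by simpa [chkF] using h]
  | succ n ih =>
    intro u v h x
    simp only [chkF, Bool.or_eq_true, Bool.and_eq_true, beq_iff_eq] at h
    rcases h with h' | ⟨⟨h1, h2⟩, h3⟩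
    · rw [h']
    · induction x with
      | nil => simp
      | cons y t _ =>
        rw [actW_cons, actW_cons, h1]
        congr 1
        cases y
        · rw [← actW_red (stW u false), ← actW_red (stW v false)]; exact ih _ _ h2 t
        · rw [← actW_red (stW u true), ← actW_red (stW v true)]; exact ih _ _ h3 t

theorem evalW_eq_of_chk {u v : W} (n : ℕ) (h : chkF n u v = true) : evalW u = evalW v :=
  Equiv.ext fun x => by rw [evalW_coe, evalW_coe]; exact chkF_sound n u v h x
/-! ### pairPerm and vstar algebra -/

theorem vstar_coe (v : V) (g : Perm V) : ⇑(vstar v g) = vstarFun v ⇑g := rfl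

theorem vstar_nil (g : Perm V) : vstar [] g = g :=
  Equiv.ext fun w => by simp [vstar_coe, vstarFun, List.nil_prefix]

theorem vstar_mul (v : V) (g h : Perm V) : vstar v (g * h) = vstar v g * vstar v h :=
  Equiv.ext fun w => by
    simp only [Perm.mul_apply, vstar_coe, vstarFun_comp]
    rfl

theorem vstar_one (v : V) : vstar v 1 = 1 :=
  Equiv.ext fun w => by
    have := vstarFun_id v w
    simpa [vstar_coe] using this

def vstarHom (v : V) : Perm V →* Perm V where
  toFun := vstar v
  map_one' := vstar_one v
  map_mul' := vstar_mul v

theorem vstarFun_cons (x : Bool) (v : V) (f : V → V) (w : V) :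
    vstarFun (x :: v) f w = vstarFun [x] (vstarFun v f) w := by
  cases w with
  | nil =>
    simp [vstarFun, List.IsPrefix]
  | cons y t =>
    by_cases hxy : x = y
    · subst hxy
      by_cases h : v <+: t
      · obtain ⟨r, rfl⟩ := h
        have h1 : (x :: v) <+: (x :: (v ++ r)) := ⟨r, rfl⟩
        have h2 : [x] <+: (x :: (v ++ r)) := ⟨v ++ r, rfl⟩
        rw [vstarFun, if_pos h1, vstarFun, if_pos h2]
        simp [vstarFun, List.prefix_append]
      · have h1 : ¬ (x :: v) <+: (x :: t) := by
          intro hc; exact h (List.cons_prefix_cons.mp hc).2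
        have h2 : [x] <+: (x :: t) := ⟨t, rfl⟩
        rw [vstarFun, if_neg h1, vstarFun, if_pos h2]
        simp [vstarFun, if_neg h]
    · have h1 : ¬ (x :: v) <+: (y :: t) := by
        intro hc; exact hxy (List.cons_prefix_cons.mp hc).1
      have h2 : ¬ [x] <+: (y :: t) := by
        intro hc; exact hxy (List.cons_prefix_cons.mp hc).1
      rw [vstarFun, if_neg h1, vstarFun, if_neg h2]

theorem vstar_cons (x : Bool) (v : V) (g : Perm V) :
    vstar (x :: v) g = vstar [x] (vstar v g) :=
  Equiv.ext fun w => vstarFun_cons x v (⇑g) w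

theorem vstar_single_apply (x : Bool) (g : Perm V) (y : Bool) (t : V) :
    vstar [x] g (y :: t) = if x = y then y :: g t else y :: t := by
  by_cases h : x = y
  · subst h
    have h2 : [x] <+: (x :: t) := ⟨t, rfl⟩
    simp [vstar_coe, vstarFun, if_pos h2]
  · have h2 : ¬ [x] <+: (y :: t) := fun hc => h (List.cons_prefix_cons.mp hc).1
    simp [vstar_coe, vstarFun, if_neg h2, if_neg h]

@[simp] theorem vstar_apply_nil (v0 : Bool) (v : V) (g : Perm V) :
    vstar (v0 :: v) g [] = [] := by
  have : ¬ (v0 :: v) <+: ([] : V) := by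
    intro hc; exact absurd (List.eq_nil_of_prefix_nil hc) (by simp)
  simp [vstar_coe, vstarFun, if_neg this]

@[simp] theorem pairPerm_apply_nil (s t : Perm V) : pairPerm s t [] = [] := by
  simp [pairPerm, Perm.mul_apply]

@[simp] theorem pairPerm_apply_cons (s t : Perm V) (x : Bool) (v : V) :
    pairPerm s t (x :: v) = x :: (if x then t v else s v) := by
  cases x <;>
    simp [pairPerm, Perm.mul_apply, vstar_single_apply]

theorem pairPerm_mul (s t u w : Perm V) :
    pairPerm s t * pairPerm u w = pairPerm (s * u) (t * w) :=
  Equiv.ext fun v => by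
    cases v with
    | nil => simp [Perm.mul_apply]
    | cons x v => cases x <;> simp [Perm.mul_apply]

theorem pairPerm_one : pairPerm 1 1 = 1 :=
  Equiv.ext fun v => by
    cases v with
    | nil => simp
    | cons x v => cases x <;> simp

theorem pairPerm_inv (s t : Perm V) : (pairPerm s t)⁻¹ = pairPerm s⁻¹ t⁻¹ :=
  inv_eq_of_mul_eq_one_right (by rw [pairPerm_mul, mul_inv_cancel, mul_inv_cancel, pairPerm_one])

theorem a_mul_self : a * a = 1 := Equiv.ext fun v => by
  simp only [Perm.mul_apply, coe_a, Perm.one_apply]; exact actA_invol v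

theorem a_inv : a⁻¹ = a := inv_eq_of_mul_eq_one_right a_mul_self

theorem a_pair (s t : Perm V) : a * pairPerm s t * a = pairPerm t s :=
  Equiv.ext fun v => by
    cases v with
    | nil => simp [Perm.mul_apply, coe_a, actA]
    | cons x v => cases x <;> simp [Perm.mul_apply, coe_a, actA]

theorem b_pair : b = pairPerm c a :=
  Equiv.ext fun v => by
    cases v with
    | nil => rfl
    | cons x v => cases x <;> simp [coe_b, actB]

theorem c_pair : c = pairPerm a d :=
  Equiv.ext fun v => by
    cases v with
    | nil => rfl
    | cons x v => cases x <;> simp [coe_c, actC]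

theorem d_pair : d = pairPerm 1 b :=
  Equiv.ext fun v => by
    cases v with
    | nil => rfl
    | cons x v => cases x <;> simp [coe_d, actD]

theorem vstar_false (g : Perm V) : vstar [false] g = pairPerm g 1 := by
  rw [pairPerm, vstar_one, mul_one]

theorem vstar_true (g : Perm V) : vstar [true] g = pairPerm 1 g := by
  rw [pairPerm, vstar_one, one_mul]

/-- the checker proves pair decompositions -/
theorem evalW_eq_pair {w u0 u1 : W} (n : ℕ) (hs : sW w = false)
    (h0 : chkF n (red (stW w false)) (red u0) = true)
    (h1 : chkF n (red (stW w true)) (red u1) = true) :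
    evalW w = pairPerm (evalW u0) (evalW u1) :=
  Equiv.ext fun v => by
    rw [evalW_coe]
    cases v with
    | nil => simp
    | cons x t =>
      rw [actW_cons, hs, pairPerm_apply_cons, evalW_coe, evalW_coe]
      have e0 := chkF_sound n _ _ h0 t
      have e1 := chkF_sound n _ _ h1 t
      rw [actW_red, actW_red] at e0 e1
      cases x
      · simpa using e0
      · simpa using e1
/-! ### G and K basics -/

theorem gen_mem_G (i : Fin 4) : gen i ∈ G := by
  fin_cases i
  exacts [a_mem_G, b_mem_G, c_mem_G, d_mem_G]

theorem evalW_mem_G (w : W) : evalW w ∈ G := by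
  induction w with
  | nil => exact one_mem G
  | cons i w ih => rw [evalW_cons]; exact mul_mem (gen_mem_G i) ih

theorem exists_word {g : Perm V} (hg : g ∈ G) :
    ∃ l : List (Perm V), (∀ y ∈ l, ∃ i : Fin 4, y = gen i) ∧ l.prod = g := by
  have hg' : g ∈ (Subgroup.closure {a, b, c, d}).toSubmonoid := hg
  rw [Subgroup.closure_toSubmonoid] at hg'
  obtain ⟨l, hl, hp⟩ := Submonoid.exists_list_of_mem_closure hg'
  refine ⟨l, fun y hy => ?_, hp⟩
  have g0 : gen 0 = a := rfl
  have g1 : gen 1 = b := rfl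
  have g2 : gen 2 = c := rfl
  have g3 : gen 3 = d := rfl
  rcases hl y hy with h | h
  · rcases h with h | h | h | h
    · exact ⟨0, by rw [g0, h]⟩
    · exact ⟨1, by rw [g1, h]⟩
    · exact ⟨2, by rw [g2, h]⟩
    · exact ⟨3, by rw [g3]; simpa using h⟩
  · rcases h with h | h | h | h
    · exact ⟨0, by rw [g0, ← inv_inv y, show y⁻¹ = a from h, a_inv]⟩
    · exact ⟨1, by rw [g1, ← inv_inv y, show y⁻¹ = b from h, show b⁻¹ = b from gen_inv 1]⟩
    · exact ⟨2, by rw [g2, ← inv_inv y, show y⁻¹ = c from h, show c⁻¹ = c from gen_inv 2]⟩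
    · exact ⟨3, by rw [g3, ← inv_inv y, show y⁻¹ = d from by simpa using h,
        show d⁻¹ = d from gen_inv 3]⟩

/-- the five normal generators of K -/
def xgen : Fin 5 → Perm V
  | 0 => pc a b | 1 => pc b c | 2 => pc b d | 3 => pc c d | 4 => b * c * d

/-- word forms -/
def xw : Fin 5 → W
  | 0 => [0,1,0,1] | 1 => [1,2,1,2] | 2 => [1,3,1,3] | 3 => [2,3,2,3] | 4 => [1,2,3]

theorem xgen_eval (i : Fin 5) : xgen i = evalW (xw i) := by
  fin_cases i <;>
    simp [xgen, xw, pc, evalW, gen, a_inv, gen_inv 1, gen_inv 2, gen_inv 3,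
      show b⁻¹ = b from gen_inv 1, show c⁻¹ = c from gen_inv 2, show d⁻¹ = d from gen_inv 3,
      mul_assoc]

theorem xgen_mem_K (i : Fin 5) : xgen i ∈ K := by
  apply Subgroup.subset_closure
  refine ⟨xgen i, ?_, 1, one_mem G, by group⟩
  fin_cases i <;> simp [xgen]

theorem xgen_mem_G (i : Fin 5) : xgen i ∈ G := by
  rw [xgen_eval]; exact evalW_mem_G _

theorem K_le_G : K ≤ G := by
  rw [K, ncl]
  apply Subgroup.closure_le (K := G) |>.mpr
  rintro x ⟨s, hs, g, hg, rfl⟩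
  have hsG : s ∈ G := by
    rcases hs with h | h | h | h | h <;> subst h
    exacts [xgen_mem_G 0, xgen_mem_G 1, xgen_mem_G 2, xgen_mem_G 3, xgen_mem_G 4]
  exact mul_mem (mul_mem (inv_mem hg) hsG) hg

theorem K_conj {k g : Perm V} (hk : k ∈ K) (hg : g ∈ G) : g⁻¹ * k * g ∈ K := by
  revert hk
  refine fun hk => Subgroup.closure_induction
    (p := fun k _ => g⁻¹ * k * g ∈ K)
    (fun x hx => ?_) (by simpa using one_mem K)
    (fun x y _ _ hx hy => by
      show g⁻¹ * (x * y) * g ∈ K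
      have : g⁻¹ * (x * y) * g = (g⁻¹ * x * g) * (g⁻¹ * y * g) := by group
      rw [this]; exact mul_mem hx hy)
    (fun x _ hx => by
      show g⁻¹ * x⁻¹ * g ∈ K
      have : g⁻¹ * x⁻¹ * g = (g⁻¹ * x * g)⁻¹ := by group
      rw [this]; exact inv_mem hx) hk
  obtain ⟨s, hs, h, hh, rfl⟩ := hx
  apply Subgroup.subset_closure
  exact ⟨s, hs, h * g, mul_mem hh hg, by group⟩

/-- conjugate-product words: each factor is (sign, base word, conjugator word) -/
def cwf : Bool × W × W → W := fun f =>
  f.2.2.reverse ++ (if f.1 then f.2.1 else f.2.1.reverse) ++ f.2.2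

def cw : List (Bool × W × W) → W := fun L => (L.map cwf).flatten

theorem cw_mem (L : List (Bool × W × W)) (h : ∀ f ∈ L, evalW f.2.1 ∈ K) :
    evalW (cw L) ∈ K := by
  induction L with
  | nil => exact one_mem K
  | cons f L ih =>
    rw [cw, List.map_cons, List.flatten_cons, evalW_append]
    refine mul_mem ?_ (ih fun f hf => h f (List.mem_cons_of_mem _ hf))
    rw [cwf, evalW_append, evalW_append, evalW_reverse]
    have hb : evalW (if f.1 then f.2.1 else f.2.1.reverse) ∈ K := by
      cases hf : f.1
      · rw [if_neg (by simp [hf]), evalW_reverse]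
        exact inv_mem (h f (List.mem_cons_self))
      · rw [if_pos rfl]
        exact h f (List.mem_cons_self)
    exact K_conj hb (evalW_mem_G f.2.2)
/-! ### partner and decomposition lemmas -/

theorem partner {g : Perm V} (hg : g ∈ G) : ∃ h, h ∈ G ∧ pairPerm g h ∈ G := by
  refine Subgroup.closure_induction (p := fun g _ => ∃ h, h ∈ G ∧ pairPerm g h ∈ G)
    (fun x hx => ?_) ⟨1, one_mem G, by rw [pairPerm_one]; exact one_mem G⟩
    (fun x y _ _ ⟨hx, hxG, hxp⟩ ⟨hy, hyG, hyp⟩ =>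
      ⟨hx * hy, mul_mem hxG hyG, by rw [← pairPerm_mul]; exact mul_mem hxp hyp⟩)
    (fun x _ ⟨hx, hxG, hxp⟩ =>
      ⟨hx⁻¹, inv_mem hxG, by rw [← pairPerm_inv]; exact inv_mem hxp⟩) hg
  rcases hx with h | h | h | h
  · -- x = a : c = pairPerm a d
    subst h
    exact ⟨d, d_mem_G, by rw [← c_pair]; exact c_mem_G⟩
  · -- x = b : a*d*a = pairPerm b 1
    subst h
    refine ⟨1, one_mem G, ?_⟩
    have : pairPerm b 1 = a * d * a := by
      rw [d_pair, show a * pairPerm 1 b * a = pairPerm b 1 from a_pair 1 b]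
    rw [this]
    exact mul_mem (mul_mem a_mem_G d_mem_G) a_mem_G
  · -- x = c : b = pairPerm c a
    subst h
    exact ⟨a, a_mem_G, by rw [← b_pair]; exact b_mem_G⟩
  · -- x = d : a*c*a = pairPerm d a
    have h' : x = d := by simpa using h
    subst h'
    refine ⟨a, a_mem_G, ?_⟩
    have : pairPerm d a = a * c * a := by
      rw [c_pair, show a * pairPerm a d * a = pairPerm d a from a_pair a d]
    rw [this]
    exact mul_mem (mul_mem a_mem_G c_mem_G) a_mem_G

theorem decomp {g : Perm V} (hg : g ∈ G) :
    ∃ g₀ g₁, g₀ ∈ G ∧ g₁ ∈ G ∧ (g = pairPerm g₀ g₁ ∨ g = pairPerm g₀ g₁ * a) := by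
  refine Subgroup.closure_induction
    (p := fun g _ => ∃ g₀ g₁, g₀ ∈ G ∧ g₁ ∈ G ∧ (g = pairPerm g₀ g₁ ∨ g = pairPerm g₀ g₁ * a))
    (fun x hx => ?_) ⟨1, 1, one_mem G, one_mem G, Or.inl (by rw [pairPerm_one])⟩
    (fun x y _ _ hx hy => ?_) (fun x _ hx => ?_) hg
  · rcases hx with h | h | h | h
    · exact ⟨1, 1, one_mem G, one_mem G, Or.inr (by rw [pairPerm_one, one_mul, h])⟩
    · exact ⟨c, a, c_mem_G, a_mem_G, Or.inl (by rw [← b_pair, h])⟩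
    · exact ⟨a, d, a_mem_G, d_mem_G, Or.inl (by rw [← c_pair, h])⟩
    · exact ⟨1, b, one_mem G, b_mem_G, Or.inl (by rw [← d_pair]; simpa using h)⟩
  · obtain ⟨x₀, x₁, hx₀, hx₁, hxe⟩ := hx
    obtain ⟨y₀, y₁, hy₀, hy₁, hye⟩ := hy
    have swap : ∀ s t : Perm V, a * pairPerm s t = pairPerm t s * a := by
      intro s t
      have := a_pair s t
      calc a * pairPerm s t = (a * pairPerm s t * a) * a := by
            rw [mul_assoc, a_mul_self, mul_one]
        _ = pairPerm t s * a := by rw [a_pair]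
    rcases hxe with rfl | rfl <;> rcases hye with rfl | rfl
    · exact ⟨x₀ * y₀, x₁ * y₁, mul_mem hx₀ hy₀, mul_mem hx₁ hy₁, Or.inl (by rw [pairPerm_mul])⟩
    · exact ⟨x₀ * y₀, x₁ * y₁, mul_mem hx₀ hy₀, mul_mem hx₁ hy₁, Or.inr
        (by rw [← mul_assoc, pairPerm_mul])⟩
    · refine ⟨x₀ * y₁, x₁ * y₀, mul_mem hx₀ hy₁, mul_mem hx₁ hy₀, Or.inr ?_⟩
      rw [mul_assoc, swap, ← mul_assoc, pairPerm_mul]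
    · refine ⟨x₀ * y₁, x₁ * y₀, mul_mem hx₀ hy₁, mul_mem hx₁ hy₀, Or.inl ?_⟩
      rw [mul_assoc, show a * (pairPerm y₀ y₁ * a) = pairPerm y₁ y₀ from by
        rw [← mul_assoc, swap, mul_assoc, a_mul_self, mul_one], pairPerm_mul]
  · obtain ⟨x₀, x₁, hx₀, hx₁, hxe⟩ := hx
    rcases hxe with rfl | rfl
    · exact ⟨x₀⁻¹, x₁⁻¹, inv_mem hx₀, inv_mem hx₁, Or.inl (by rw [pairPerm_inv])⟩
    · refine ⟨x₁⁻¹, x₀⁻¹, inv_mem hx₁, inv_mem hx₀, Or.inr ?_⟩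
      rw [mul_inv_rev, pairPerm_inv, a_inv]
      have := a_pair x₀⁻¹ x₁⁻¹
      calc a * pairPerm x₀⁻¹ x₁⁻¹ = (a * pairPerm x₀⁻¹ x₁⁻¹ * a) * a := by
            rw [mul_assoc, a_mul_self, mul_one]
        _ = pairPerm x₁⁻¹ x₀⁻¹ * a := by rw [a_pair]

/-- an element of G that stabilizes level 1 is a pairPerm of G-elements -/
theorem decomp_stab {g : Perm V} (hg : g ∈ G) (hs : g [false] = [false]) :
    ∃ g₀ g₁, g₀ ∈ G ∧ g₁ ∈ G ∧ g = pairPerm g₀ g₁ := by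
  obtain ⟨g₀, g₁, h₀, h₁, he | he⟩ := decomp hg
  · exact ⟨g₀, g₁, h₀, h₁, he⟩
  · exfalso
    rw [he] at hs
    simp [Perm.mul_apply, coe_a, actA] at hs
/-! ### certificates for claim A -/
set_option maxRecDepth 40000

def x6w : W := [0,2,0,2,0,2,0,2]

def xw6 : Fin 6 → W
  | 0 => xw 0 | 1 => xw 1 | 2 => xw 2 | 3 => xw 3 | 4 => xw 4 | 5 => x6w

def L6 : List (Bool × W × W) := [(false, xw 1, [0]), (true, xw 0, []), (true, xw 0, []), (true, xw 1, [])]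

theorem xmemW5 (i : Fin 5) : evalW (xw i) ∈ K := xgen_eval i ▸ xgen_mem_K i

theorem x6_memW : evalW x6w ∈ K := by
  have e : evalW x6w = evalW (cw L6) := evalW_eq_of_chk 9 (by decide)
  rw [e]
  exact cw_mem L6 (by intro f hf; fin_cases hf; exacts [xmemW5 1, xmemW5 0, xmemW5 0, xmemW5 1])

theorem xmemW (i : Fin 6) : evalW (xw6 i) ∈ K := by
  fin_cases i
  exacts [xmemW5 0, xmemW5 1, xmemW5 2, xmemW5 3, xmemW5 4, x6_memW]

def pw1 : W := [1,3,1,3]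
def pL1 : List (Bool × W × W) := [(true, xw6 4, []), (true, xw6 4, [1,3])]

theorem pairR_0 : pairPerm 1 (xgen 0) ∈ K := by
  have e1 : evalW pw1 = pairPerm (evalW []) (evalW (xw 0)) :=
    evalW_eq_pair 9 (by decide) (by decide) (by decide)
  have e2 : evalW pw1 = evalW (cw pL1) := evalW_eq_of_chk 9 (by decide)
  rw [evalW_nil, ← xgen_eval] at e1
  rw [← e1, e2]
  exact cw_mem pL1 (by intro f hf; fin_cases hf; exacts [xmemW 4, xmemW 4])

def pw2 : W := [3,0,1,0,3,0,1,0]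
def pL2 : List (Bool × W × W) := [(true, xw6 0, [0]), (false, xw6 1, [2,1,0,1,0]), (true, xw6 0, [0,2,1,0,1,0]), (false, xw6 1, [0,1,0,2,1,0,1,0]), (true, xw6 4, [0,1,0]), (true, xw6 4, [0,1,0,3,0,1,0])]

theorem pairR_1 : pairPerm 1 (xgen 1) ∈ K := by
  have e1 : evalW pw2 = pairPerm (evalW []) (evalW (xw 1)) :=
    evalW_eq_pair 9 (by decide) (by decide) (by decide)
  have e2 : evalW pw2 = evalW (cw pL2) := evalW_eq_of_chk 9 (by decide)
  rw [evalW_nil, ← xgen_eval] at e1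
  rw [← e1, e2]
  exact cw_mem pL2 (by intro f hf; fin_cases hf; exacts [xmemW 0, xmemW 1, xmemW 0, xmemW 1, xmemW 4, xmemW 4])

def pw3 : W := [3,2,3,2]
def pL3 : List (Bool × W × W) := [(true, xw6 4, [2]), (true, xw6 4, [2,3,2])]

theorem pairR_2 : pairPerm 1 (xgen 2) ∈ K := by
  have e1 : evalW pw3 = pairPerm (evalW []) (evalW (xw 2)) :=
    evalW_eq_pair 9 (by decide) (by decide) (by decide)
  have e2 : evalW pw3 = evalW (cw pL3) := evalW_eq_of_chk 9 (by decide)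
  rw [evalW_nil, ← xgen_eval] at e1
  rw [← e1, e2]
  exact cw_mem pL3 (by intro f hf; fin_cases hf; exacts [xmemW 4, xmemW 4])

def pw4 : W := [0,1,0,2,0,1,0,2]
def pL4 : List (Bool × W × W) := [(false, xw6 1, [2]), (true, xw6 0, [0,2]), (true, xw6 0, [0,2,0,1,0,2])]

theorem pairR_3 : pairPerm 1 (xgen 3) ∈ K := by
  have e1 : evalW pw4 = pairPerm (evalW []) (evalW (xw 3)) :=
    evalW_eq_pair 9 (by decide) (by decide) (by decide)
  have e2 : evalW pw4 = evalW (cw pL4) := evalW_eq_of_chk 9 (by decide)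
  rw [evalW_nil, ← xgen_eval] at e1
  rw [← e1, e2]
  exact cw_mem pL4 (by intro f hf; fin_cases hf; exacts [xmemW 1, xmemW 0, xmemW 0])

def pw5 : W := [3,0,1,0,2]
def pL5 : List (Bool × W × W) := [(false, xw6 1, [2]), (true, xw6 0, [0,2]), (false, xw6 1, [0,1,0,2]), (true, xw6 4, [0,1,0,2])]

theorem pairR_4 : pairPerm 1 (xgen 4) ∈ K := by
  have e1 : evalW pw5 = pairPerm (evalW []) (evalW (xw 4)) :=
    evalW_eq_pair 9 (by decide) (by decide) (by decide)
  have e2 : evalW pw5 = evalW (cw pL5) := evalW_eq_of_chk 9 (by decide)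
  rw [evalW_nil, ← xgen_eval] at e1
  rw [← e1, e2]
  exact cw_mem pL5 (by intro f hf; fin_cases hf; exacts [xmemW 1, xmemW 0, xmemW 1, xmemW 4])

theorem pairR (i : Fin 5) : pairPerm 1 (xgen i) ∈ K := by
  fin_cases i
  exacts [pairR_0, pairR_1, pairR_2, pairR_3, pairR_4]

theorem pairL (i : Fin 5) : pairPerm (xgen i) 1 ∈ K := by
  have h := K_conj (pairR i) a_mem_G
  rw [a_inv, a_pair] at h
  exact h
/-! ### claim 1 : X*K ≤ K -/

theorem vstar_inv (v : V) (g : Perm V) : vstar v g⁻¹ = (vstar v g)⁻¹ :=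
  (vstarHom v).map_inv g

theorem XK {k : Perm V} (hk : k ∈ K) : vstar [false] k ∈ K ∧ vstar [true] k ∈ K := by
  refine Subgroup.closure_induction
    (p := fun k _ => vstar [false] k ∈ K ∧ vstar [true] k ∈ K)
    (fun x hx => ?_) (by refine (?_ : vstar [false] 1 ∈ K ∧ vstar [true] 1 ∈ K); rw [vstar_one, vstar_one]; exact ⟨one_mem K, one_mem K⟩)
    (fun x y _ _ hx hy => by
      show vstar [false] (x * y) ∈ K ∧ vstar [true] (x * y) ∈ K
      rw [vstar_mul, vstar_mul]
      exact ⟨mul_mem hx.1 hy.1, mul_mem hx.2 hy.2⟩)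
    (fun x _ hx => by
      show vstar [false] x⁻¹ ∈ K ∧ vstar [true] x⁻¹ ∈ K
      rw [vstar_inv, vstar_inv]
      exact ⟨inv_mem hx.1, inv_mem hx.2⟩) hk
  obtain ⟨s, hs, g, hg, rfl⟩ := hx
  obtain ⟨h, hhG, hp⟩ := partner hg
  have hi : ∃ i : Fin 5, s = xgen i := by
    rcases hs with h' | h' | h' | h' | h'
    exacts [⟨0, h'⟩, ⟨1, h'⟩, ⟨2, h'⟩, ⟨3, h'⟩, ⟨4, h'⟩]
  obtain ⟨i, rfl⟩ := hi
  constructor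
  · rw [vstar_false]
    have e : pairPerm (g⁻¹ * xgen i * g) 1 =
        (pairPerm g h)⁻¹ * pairPerm (xgen i) 1 * pairPerm g h := by
      rw [pairPerm_inv, pairPerm_mul, pairPerm_mul]
      congr 1
      group
    rw [e]
    exact K_conj (pairL i) hp
  · rw [vstar_true]
    have e : pairPerm 1 (g⁻¹ * xgen i * g) =
        (pairPerm h g)⁻¹ * pairPerm 1 (xgen i) * pairPerm h g := by
      rw [pairPerm_inv, pairPerm_mul, pairPerm_mul]
      congr 1
      group
    rw [e]
    have hp' : pairPerm h g ∈ G := by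
      have := K_le_G -- dummy
      have h2 : a * pairPerm g h * a = pairPerm h g := a_pair g h
      rw [← h2]
      exact mul_mem (mul_mem a_mem_G hp) a_mem_G
    exact K_conj (pairR i) hp'

theorem claim1 : XstarSub 1 K ≤ K := by
  rw [XstarSub]
  apply (Subgroup.closure_le _).mpr
  rintro p ⟨v, g, hlen, hgK, rfl⟩
  obtain ⟨x, rfl⟩ := List.length_eq_one_iff.mp hlen
  cases x
  · exact (XK hgK).1
  · exact (XK hgK).2
/-! ### level-3 action tables, encoded as base-8 natural numbers -/

def enc3 : V → ℕ
  | [x, y, z] => x.toNat + 2 * y.toNat + 4 * z.toNat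
  | _ => 0

def dec3 (k : ℕ) : V := [k % 2 == 1, k / 2 % 2 == 1, k / 4 % 2 == 1]

def dig (T e : ℕ) : ℕ := T / 8 ^ e % 8

def compT (T U : ℕ) : ℕ :=
  dig T (dig U 0) + 8 * dig T (dig U 1) + 64 * dig T (dig U 2) + 512 * dig T (dig U 3) +
  4096 * dig T (dig U 4) + 32768 * dig T (dig U 5) + 262144 * dig T (dig U 6) +
  2097152 * dig T (dig U 7)

def idN : ℕ := 16434824

def tapp (T : ℕ) (v : V) : V := dec3 (dig T (enc3 v))

def Acts3 (g : Perm V) (T : ℕ) : Prop := ∀ v : V, v.length = 3 → g v = tapp T v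

theorem len3 {v : V} (h : v.length = 3) : ∃ x y z : Bool, v = [x, y, z] := by
  match v, h with
  | [x, y, z], _ => exact ⟨x, y, z, rfl⟩

theorem dig_lt (T e : ℕ) : dig T e < 8 := Nat.mod_lt _ (by norm_num)

theorem enc3_lt {v : V} (h : v.length = 3) : enc3 v < 8 := by
  obtain ⟨x, y, z, rfl⟩ := len3 h
  cases x <;> cases y <;> cases z <;> decide

theorem enc3_dec3 : ∀ k < 8, enc3 (dec3 k) = k := by decide

theorem dec3_enc3 {v : V} (h : v.length = 3) : dec3 (enc3 v) = v := by
  obtain ⟨x, y, z, rfl⟩ := len3 h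
  cases x <;> cases y <;> cases z <;> decide

theorem dec3_len (k : ℕ) : (dec3 k).length = 3 := rfl

theorem tapp_len (T : ℕ) (v : V) : (tapp T v).length = 3 := rfl

theorem dig_sum_0 (d0 d1 d2 d3 d4 d5 d6 d7 : ℕ) (h0 : d0 < 8) (h1 : d1 < 8) (h2 : d2 < 8) (h3 : d3 < 8) (h4 : d4 < 8) (h5 : d5 < 8) (h6 : d6 < 8) (h7 : d7 < 8) :
    dig (d0 + 8*d1 + 64*d2 + 512*d3 + 4096*d4 + 32768*d5 + 262144*d6 + 2097152*d7) 0 = d0 := by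
  simp only [dig]
  norm_num
  omega
theorem dig_sum_1 (d0 d1 d2 d3 d4 d5 d6 d7 : ℕ) (h0 : d0 < 8) (h1 : d1 < 8) (h2 : d2 < 8) (h3 : d3 < 8) (h4 : d4 < 8) (h5 : d5 < 8) (h6 : d6 < 8) (h7 : d7 < 8) :
    dig (d0 + 8*d1 + 64*d2 + 512*d3 + 4096*d4 + 32768*d5 + 262144*d6 + 2097152*d7) 1 = d1 := by
  simp only [dig]
  norm_num
  omega
theorem dig_sum_2 (d0 d1 d2 d3 d4 d5 d6 d7 : ℕ) (h0 : d0 < 8) (h1 : d1 < 8) (h2 : d2 < 8) (h3 : d3 < 8) (h4 : d4 < 8) (h5 : d5 < 8) (h6 : d6 < 8) (h7 : d7 < 8) :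
    dig (d0 + 8*d1 + 64*d2 + 512*d3 + 4096*d4 + 32768*d5 + 262144*d6 + 2097152*d7) 2 = d2 := by
  simp only [dig]
  norm_num
  omega
theorem dig_sum_3 (d0 d1 d2 d3 d4 d5 d6 d7 : ℕ) (h0 : d0 < 8) (h1 : d1 < 8) (h2 : d2 < 8) (h3 : d3 < 8) (h4 : d4 < 8) (h5 : d5 < 8) (h6 : d6 < 8) (h7 : d7 < 8) :
    dig (d0 + 8*d1 + 64*d2 + 512*d3 + 4096*d4 + 32768*d5 + 262144*d6 + 2097152*d7) 3 = d3 := by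
  simp only [dig]
  norm_num
  omega
theorem dig_sum_4 (d0 d1 d2 d3 d4 d5 d6 d7 : ℕ) (h0 : d0 < 8) (h1 : d1 < 8) (h2 : d2 < 8) (h3 : d3 < 8) (h4 : d4 < 8) (h5 : d5 < 8) (h6 : d6 < 8) (h7 : d7 < 8) :
    dig (d0 + 8*d1 + 64*d2 + 512*d3 + 4096*d4 + 32768*d5 + 262144*d6 + 2097152*d7) 4 = d4 := by
  simp only [dig]
  norm_num
  omega
theorem dig_sum_5 (d0 d1 d2 d3 d4 d5 d6 d7 : ℕ) (h0 : d0 < 8) (h1 : d1 < 8) (h2 : d2 < 8) (h3 : d3 < 8) (h4 : d4 < 8) (h5 : d5 < 8) (h6 : d6 < 8) (h7 : d7 < 8) :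
    dig (d0 + 8*d1 + 64*d2 + 512*d3 + 4096*d4 + 32768*d5 + 262144*d6 + 2097152*d7) 5 = d5 := by
  simp only [dig]
  norm_num
  omega
theorem dig_sum_6 (d0 d1 d2 d3 d4 d5 d6 d7 : ℕ) (h0 : d0 < 8) (h1 : d1 < 8) (h2 : d2 < 8) (h3 : d3 < 8) (h4 : d4 < 8) (h5 : d5 < 8) (h6 : d6 < 8) (h7 : d7 < 8) :
    dig (d0 + 8*d1 + 64*d2 + 512*d3 + 4096*d4 + 32768*d5 + 262144*d6 + 2097152*d7) 6 = d6 := by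
  simp only [dig]
  norm_num
  omega
theorem dig_sum_7 (d0 d1 d2 d3 d4 d5 d6 d7 : ℕ) (h0 : d0 < 8) (h1 : d1 < 8) (h2 : d2 < 8) (h3 : d3 < 8) (h4 : d4 < 8) (h5 : d5 < 8) (h6 : d6 < 8) (h7 : d7 < 8) :
    dig (d0 + 8*d1 + 64*d2 + 512*d3 + 4096*d4 + 32768*d5 + 262144*d6 + 2097152*d7) 7 = d7 := by
  simp only [dig]
  norm_num
  omega

theorem dig_compT (T U : ℕ) : ∀ e < 8, dig (compT T U) e = dig T (dig U e) := by
  intro e he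
  unfold compT
  interval_cases e
  exacts [dig_sum_0 _ _ _ _ _ _ _ _ (dig_lt _ _) (dig_lt _ _) (dig_lt _ _) (dig_lt _ _)
      (dig_lt _ _) (dig_lt _ _) (dig_lt _ _) (dig_lt _ _),
    dig_sum_1 _ _ _ _ _ _ _ _ (dig_lt _ _) (dig_lt _ _) (dig_lt _ _) (dig_lt _ _)
      (dig_lt _ _) (dig_lt _ _) (dig_lt _ _) (dig_lt _ _),
    dig_sum_2 _ _ _ _ _ _ _ _ (dig_lt _ _) (dig_lt _ _) (dig_lt _ _) (dig_lt _ _)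
      (dig_lt _ _) (dig_lt _ _) (dig_lt _ _) (dig_lt _ _),
    dig_sum_3 _ _ _ _ _ _ _ _ (dig_lt _ _) (dig_lt _ _) (dig_lt _ _) (dig_lt _ _)
      (dig_lt _ _) (dig_lt _ _) (dig_lt _ _) (dig_lt _ _),
    dig_sum_4 _ _ _ _ _ _ _ _ (dig_lt _ _) (dig_lt _ _) (dig_lt _ _) (dig_lt _ _)
      (dig_lt _ _) (dig_lt _ _) (dig_lt _ _) (dig_lt _ _),
    dig_sum_5 _ _ _ _ _ _ _ _ (dig_lt _ _) (dig_lt _ _) (dig_lt _ _) (dig_lt _ _)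
      (dig_lt _ _) (dig_lt _ _) (dig_lt _ _) (dig_lt _ _),
    dig_sum_6 _ _ _ _ _ _ _ _ (dig_lt _ _) (dig_lt _ _) (dig_lt _ _) (dig_lt _ _)
      (dig_lt _ _) (dig_lt _ _) (dig_lt _ _) (dig_lt _ _),
    dig_sum_7 _ _ _ _ _ _ _ _ (dig_lt _ _) (dig_lt _ _) (dig_lt _ _) (dig_lt _ _)
      (dig_lt _ _) (dig_lt _ _) (dig_lt _ _) (dig_lt _ _)]

theorem compT_lt (T U : ℕ) : compT T U < 16777216 := by
  unfold compT
  have h0 := dig_lt T (dig U 0); have h1 := dig_lt T (dig U 1)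
  have h2 := dig_lt T (dig U 2); have h3 := dig_lt T (dig U 3)
  have h4 := dig_lt T (dig U 4); have h5 := dig_lt T (dig U 5)
  have h6 := dig_lt T (dig U 6); have h7 := dig_lt T (dig U 7)
  omega

theorem tapp_comp (T U : ℕ) {v : V} (h : v.length = 3) :
    tapp T (tapp U v) = tapp (compT T U) v := by
  unfold tapp
  rw [enc3_dec3 _ (dig_lt U (enc3 v)), dig_compT T U _ (enc3_lt h)]

theorem tapp_idN {v : V} (h : v.length = 3) : tapp idN v = v := by
  have h8 := enc3_lt h
  have : dig idN (enc3 v) = enc3 v := by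
    unfold dig idN
    interval_cases he : enc3 v <;> norm_num
  rw [tapp, this, dec3_enc3 h]

theorem Acts3_one : Acts3 1 idN := fun v hv => by
  rw [Perm.one_apply, tapp_idN hv]

theorem Acts3_mul {g h : Perm V} {T U : ℕ} (hg : Acts3 g T) (hh : Acts3 h U) :
    Acts3 (g * h) (compT T U) := fun v hv => by
  rw [Perm.mul_apply, hh v hv, hg _ (tapp_len U v), tapp_comp T U hv]

theorem Acts3_inv {g : Perm V} {T U : ℕ} (hg : Acts3 g T) (hTU : compT T U = idN) :
    Acts3 g⁻¹ U := fun v hv => by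
  have : g (tapp U v) = v := by
    rw [hg _ (tapp_len U v), tapp_comp T U hv, hTU, tapp_idN hv]
  conv_lhs => rw [← this]
  exact Equiv.symm_apply_apply g _

theorem Acts3_unique {g : Perm V} {T T' : ℕ} (h1 : Acts3 g T) (h2 : Acts3 g T')
    (b1 : T < 16777216) (b2 : T' < 16777216) : T = T' := by
  have key : ∀ e < 8, dig T e = dig T' e := by
    intro e he
    have hv : (dec3 e).length = 3 := dec3_len e
    have := (h1 _ hv).symm.trans (h2 _ hv)
    unfold tapp at this
    rw [enc3_dec3 e he] at this
    have inj : enc3 (dec3 (dig T e)) = enc3 (dec3 (dig T' e)) := by rw [this]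
    rwa [enc3_dec3 _ (dig_lt T e), enc3_dec3 _ (dig_lt T' e)] at inj
  have e0 := key 0 (by norm_num); have e1 := key 1 (by norm_num)
  have e2 := key 2 (by norm_num); have e3 := key 3 (by norm_num)
  have e4 := key 4 (by norm_num); have e5 := key 5 (by norm_num)
  have e6 := key 6 (by norm_num); have e7 := key 7 (by norm_num)
  unfold dig at e0 e1 e2 e3 e4 e5 e6 e7
  norm_num at e0 e1 e2 e3 e4 e5 e6 e7
  omega

theorem Acts3_word (w : W) (T : ℕ) (h : ∀ x y z : Bool, actW w [x, y, z] = tapp T [x, y, z]) :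
    Acts3 (evalW w) T := fun v hv => by
  obtain ⟨x, y, z, rfl⟩ := len3 hv
  rw [evalW_coe]
  exact h x y z
/-! ### level-3 data: Q-bar pairs, K-bar pairs, generator and rep tables -/

def Qp : List (ℕ × ℕ) := [(16434824,16434824), (8048264,8048264), (15386504,15386504), (6999944,6999944), (12305048,12305048), (3918488,12174008), (11256728,11256728), (2870168,11125688), (16303784,16303784), (7917224,7917224), (15255464,15255464), (6868904,6868904), (12174008,3918488), (3787448,3787448), (11125688,2870168), (2739128,2739128), (14570689,14570689), (6184129,13522369), (13522369,6184129), (5135809,5135809), (10440913,14054467), (2054353,14038087), (9392593,5667907), (1006033,5651527), (14439649,14554309), (6053089,13505989), (13391329,6167749), (5004769,5119429), (10309873,13006147), (1923313,12989767), (9261553,4619587), (874993,4603207), (15918602,15918602), (7532042,7532042), (14870282,15902222), (6483722,7515662), (11788826,11788826), (3402266,11657786), (10740506,11772446), (2353946,11641406), (15787562,15787562), (7401002,7401002), (14739242,15771182), (6352682,7384622), (11657786,3402266), (3271226,3271226), (10609466,3385886), (2222906,3254846), (14054467,10440913), (5667907,9392593), (13006147,10309873), (4619587,9261553), (9924691,9924691),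 (1538131,9908311), (8876371,9793651), (489811,9777271), (13923427,10424533), (5536867,9376213), (12875107,10293493), (4488547,9245173), (9793651,8876371), (1407091,8859991), (8745331,8745331), (358771,8728951), (16418444,16418444), (8031884,8031884), (15370124,15370124), (6983564,6983564), (12288668,12288668), (3902108,12157628), (11240348,11240348), (2853788,11109308), (16287404,16287404), (7900844,7900844), (15239084,15239084), (6852524,6852524), (12157628,3902108), (3771068,3771068), (11109308,2853788), (2722748,2722748), (14554309,14439649), (6167749,13391329), (13505989,6053089), (5119429,5004769), (10424533,13923427), (2037973,13907047), (9376213,5536867), (989653,5520487), (14423269,14423269), (6036709,13374949), (13374949,6036709), (4988389,4988389), (10293493,12875107), (1906933,12858727), (9245173,4488547), (858613,4472167), (15902222,14870282), (7515662,6483722), (14853902,14853902), (6467342,6467342), (11772446,10740506), (3385886,10609466), (10724126,10724126), (2337566,10593086), (15771182,14739242), (7384622,6352682), (14722862,14722862), (6336302,6336302), (11641406,2353946), (3254846,2222906), (10593086,2337566), (2206526,2206526), (14038087,2054353), (5651527,1006033), (12989767,1923313), (4603207,874993), (9908311,1538131), (1521751,1521751), (8859991,1407091), (473431,1390711), (13907047,2037973),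 (5520487,989653), (12858727,1906933), (4472167,858613), (9777271,489811), (1390711,473431), (8728951,358771), (342391,342391)]

def Kp : List (ℕ × ℕ) := [(16434824,16434824), (7917224,7917224), (2353946,11641406), (10609466,3385886), (15370124,15370124), (6852524,6852524), (3385886,10609466), (11641406,2353946)]

def gT : Fin 4 → ℕ
  | 0 => 14570689
  | 1 => 12288668
  | 2 => 15918602
  | 3 => 8048264

def xT : Fin 5 → ℕ × ℕ
  | 0 => (3385886,10609466)
  | 1 => (15370124,15370124)
  | 2 => (7917224,7917224)
  | 3 => (16434824,16434824)
  | 4 => (2353946,11641406)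

def T16 : List (W × ℕ) := [([],16434824), ([0],14570689), ([2],15918602), ([0,2],14054467), ([2,0],10440913), ([0,2,0],12305048), ([2,0,2],9924691), ([0,2,0,2],11788826), ([1],12288668), ([1,0],13923427), ([1,2],10740506), ([1,0,2],14439649), ([1,2,0],1538131), ([1,0,2,0],16418444), ([1,2,0,2],2054353), ([1,0,2,0,2],14870282)]


theorem fQ_id : ((idN, idN) : ℕ × ℕ) ∈ Qp := by decide
theorem fK_id : ((idN, idN) : ℕ × ℕ) ∈ Kp := by decide
theorem fT_id : (([], idN) : W × ℕ) ∈ T16 := by decide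
theorem fQ_gen : ∀ i : Fin 4, ∀ p ∈ Qp, ((compT (gT i) p.1, compT p.2 (gT i)) : ℕ × ℕ) ∈ Qp := by decide
theorem fK_mul : ∀ p ∈ Kp, ∀ q ∈ Kp, ((compT p.1 q.1, compT q.2 p.2) : ℕ × ℕ) ∈ Kp := by decide
theorem fK_inv : ∀ p ∈ Kp, ((p.2, p.1) : ℕ × ℕ) ∈ Kp := by decide
theorem fK_conj : ∀ p ∈ Qp, ∀ i : Fin 5,
    ((compT (compT p.2 (xT i).1) p.1, compT (compT p.2 (xT i).2) p.1) : ℕ × ℕ) ∈ Kp := by decide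
theorem fT_sep : ∀ p ∈ T16, ∀ q ∈ Kp, p.1 = ([] : W) ∨ compT p.2 q.1 ≠ idN := by decide
theorem fT_acts' : ∀ p ∈ T16, ∀ x y z : Bool, actW p.1 [x,y,z] = tapp p.2 [x,y,z] := by decide
theorem fgen_acts' : ∀ i : Fin 4, ∀ x y z : Bool, actW [i] [x,y,z] = tapp (gT i) [x,y,z] := by decide
theorem fx_acts' : ∀ i : Fin 5, ∀ x y z : Bool, actW (xw i) [x,y,z] = tapp (xT i).1 [x,y,z] := by decide
theorem fxi_acts' : ∀ i : Fin 5, ∀ x y z : Bool,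
    actW (xw i).reverse [x,y,z] = tapp (xT i).2 [x,y,z] := by decide

theorem fT_acts : ∀ p ∈ T16, Acts3 (evalW p.1) p.2 :=
  fun p hp => Acts3_word p.1 p.2 (fT_acts' p hp)

theorem evalW_single (i : Fin 4) : evalW [i] = gen i := by simp [evalW]

theorem Acts3_gen (i : Fin 4) : Acts3 (gen i) (gT i) := by
  rw [← evalW_single i]
  exact Acts3_word [i] (gT i) (fgen_acts' i)

theorem Acts3_xgen (i : Fin 5) : Acts3 (xgen i) (xT i).1 := by
  rw [xgen_eval i]
  exact Acts3_word (xw i) (xT i).1 (fx_acts' i)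

theorem Acts3_xgen_inv (i : Fin 5) : Acts3 (xgen i)⁻¹ (xT i).2 := by
  rw [xgen_eval i, ← evalW_reverse]
  exact Acts3_word (xw i).reverse (xT i).2 (fxi_acts' i)

theorem QActs_list : ∀ l : List (Perm V), (∀ y ∈ l, ∃ i : Fin 4, y = gen i) →
    ∃ p ∈ Qp, Acts3 l.prod p.1 ∧ Acts3 (l.prod)⁻¹ p.2 := by
  intro l
  induction l with
  | nil =>
    intro _
    exact ⟨(idN, idN), fQ_id, by simpa using Acts3_one, by simpa using Acts3_one⟩
  | cons s l ih =>
    intro hl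
    obtain ⟨p, hp, h1, h2⟩ := ih (fun y hy => hl y (List.mem_cons_of_mem _ hy))
    obtain ⟨i, hi⟩ := hl s (List.mem_cons_self)
    subst hi
    refine ⟨(compT (gT i) p.1, compT p.2 (gT i)), fQ_gen i p hp, ?_, ?_⟩
    · rw [List.prod_cons]; exact Acts3_mul (Acts3_gen i) h1
    · rw [List.prod_cons, mul_inv_rev, gen_inv]; exact Acts3_mul h2 (Acts3_gen i)

theorem QActs {g : Perm V} (hg : g ∈ G) : ∃ p ∈ Qp, Acts3 g p.1 ∧ Acts3 g⁻¹ p.2 := by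
  obtain ⟨l, hl, rfl⟩ := exists_word hg
  exact QActs_list l hl

theorem KActs {k : Perm V} (hk : k ∈ K) : ∃ p ∈ Kp, Acts3 k p.1 ∧ Acts3 k⁻¹ p.2 := by
  refine Subgroup.closure_induction
    (p := fun k _ => ∃ p ∈ Kp, Acts3 k p.1 ∧ Acts3 k⁻¹ p.2)
    (fun x hx => ?_)
    ⟨(idN, idN), fK_id, Acts3_one, by rw [inv_one]; exact Acts3_one⟩
    (fun x y _ _ ⟨p, hp, hx1, hx2⟩ ⟨q, hq, hy1, hy2⟩ =>
      ⟨(compT p.1 q.1, compT q.2 p.2), fK_mul p hp q hq, Acts3_mul hx1 hy1, by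
        rw [mul_inv_rev]; exact Acts3_mul hy2 hx2⟩)
    (fun x _ ⟨p, hp, hx1, hx2⟩ =>
      ⟨(p.2, p.1), fK_inv p hp, hx2, by rw [inv_inv]; exact hx1⟩) hk
  obtain ⟨s, hs, g, hg, rfl⟩ := hx
  have hi : ∃ i : Fin 5, s = xgen i := by
    rcases hs with h | h | h | h | h
    exacts [⟨0, h⟩, ⟨1, h⟩, ⟨2, h⟩, ⟨3, h⟩, ⟨4, h⟩]
  obtain ⟨i, rfl⟩ := hi
  obtain ⟨p, hp, h1, h2⟩ := QActs hg
  refine ⟨(compT (compT p.2 (xT i).1) p.1, compT (compT p.2 (xT i).2) p.1),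
    fK_conj p hp i, ?_, ?_⟩
  · exact Acts3_mul (Acts3_mul h2 (Acts3_xgen i)) h1
  · have e : (g⁻¹ * xgen i * g)⁻¹ = g⁻¹ * (xgen i)⁻¹ * g := by group
    rw [e]
    exact Acts3_mul (Acts3_mul h2 (Acts3_xgen_inv i)) h1
/-! ### the 64 coset-step certificates -/

theorem certshape (t' t : W) (i : Fin 4) :
    evalW (t'.reverse ++ i :: t) = (evalW t')⁻¹ * (gen i * evalW t) := by
  rw [evalW_append, evalW_reverse, evalW_cons]

theorem cert_0_0 :
    (evalW [0])⁻¹ * (gen 0 * evalW []) ∈ K := by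
  have e : evalW (([0] : W).reverse ++ 0 :: []) =
      evalW (cw []) := evalW_eq_of_chk 9 (by decide)
  rw [certshape] at e
  rw [e]
  exact cw_mem _ (by intro f hf; simp at hf)

theorem cert_0_1 :
    (evalW [])⁻¹ * (gen 0 * evalW [0]) ∈ K := by
  have e : evalW (([] : W).reverse ++ 0 :: [0]) =
      evalW (cw []) := evalW_eq_of_chk 9 (by decide)
  rw [certshape] at e
  rw [e]
  exact cw_mem _ (by intro f hf; simp at hf)

theorem cert_0_2 :
    (evalW [0,2])⁻¹ * (gen 0 * evalW [2]) ∈ K := by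
  have e : evalW (([0,2] : W).reverse ++ 0 :: [2]) =
      evalW (cw []) := evalW_eq_of_chk 9 (by decide)
  rw [certshape] at e
  rw [e]
  exact cw_mem _ (by intro f hf; simp at hf)

theorem cert_0_3 :
    (evalW [2])⁻¹ * (gen 0 * evalW [0,2]) ∈ K := by
  have e : evalW (([2] : W).reverse ++ 0 :: [0,2]) =
      evalW (cw []) := evalW_eq_of_chk 9 (by decide)
  rw [certshape] at e
  rw [e]
  exact cw_mem _ (by intro f hf; simp at hf)

theorem cert_0_4 :
    (evalW [0,2,0])⁻¹ * (gen 0 * evalW [2,0]) ∈ K := by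
  have e : evalW (([0,2,0] : W).reverse ++ 0 :: [2,0]) =
      evalW (cw []) := evalW_eq_of_chk 9 (by decide)
  rw [certshape] at e
  rw [e]
  exact cw_mem _ (by intro f hf; simp at hf)

theorem cert_0_5 :
    (evalW [2,0])⁻¹ * (gen 0 * evalW [0,2,0]) ∈ K := by
  have e : evalW (([2,0] : W).reverse ++ 0 :: [0,2,0]) =
      evalW (cw []) := evalW_eq_of_chk 9 (by decide)
  rw [certshape] at e
  rw [e]
  exact cw_mem _ (by intro f hf; simp at hf)

theorem cert_0_6 :
    (evalW [0,2,0,2])⁻¹ * (gen 0 * evalW [2,0,2]) ∈ K := by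
  have e : evalW (([0,2,0,2] : W).reverse ++ 0 :: [2,0,2]) =
      evalW (cw []) := evalW_eq_of_chk 9 (by decide)
  rw [certshape] at e
  rw [e]
  exact cw_mem _ (by intro f hf; simp at hf)

theorem cert_0_7 :
    (evalW [2,0,2])⁻¹ * (gen 0 * evalW [0,2,0,2]) ∈ K := by
  have e : evalW (([2,0,2] : W).reverse ++ 0 :: [0,2,0,2]) =
      evalW (cw []) := evalW_eq_of_chk 9 (by decide)
  rw [certshape] at e
  rw [e]
  exact cw_mem _ (by intro f hf; simp at hf)

theorem cert_0_8 :
    (evalW [1,0])⁻¹ * (gen 0 * evalW [1]) ∈ K := by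
  have e : evalW (([1,0] : W).reverse ++ 0 :: [1]) =
      evalW (cw [(true, xw6 0, [])]) := evalW_eq_of_chk 9 (by decide)
  rw [certshape] at e
  rw [e]
  exact cw_mem _ (by intro f hf; fin_cases hf; exacts [xmemW 0])

theorem cert_0_9 :
    (evalW [1])⁻¹ * (gen 0 * evalW [1,0]) ∈ K := by
  have e : evalW (([1] : W).reverse ++ 0 :: [1,0]) =
      evalW (cw [(true, xw6 0, [0])]) := evalW_eq_of_chk 9 (by decide)
  rw [certshape] at e
  rw [e]
  exact cw_mem _ (by intro f hf; fin_cases hf; exacts [xmemW 0])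

theorem cert_0_10 :
    (evalW [1,0,2])⁻¹ * (gen 0 * evalW [1,2]) ∈ K := by
  have e : evalW (([1,0,2] : W).reverse ++ 0 :: [1,2]) =
      evalW (cw [(true, xw6 0, [2])]) := evalW_eq_of_chk 9 (by decide)
  rw [certshape] at e
  rw [e]
  exact cw_mem _ (by intro f hf; fin_cases hf; exacts [xmemW 0])

theorem cert_0_11 :
    (evalW [1,2])⁻¹ * (gen 0 * evalW [1,0,2]) ∈ K := by
  have e : evalW (([1,2] : W).reverse ++ 0 :: [1,0,2]) =
      evalW (cw [(true, xw6 0, [0,2])]) := evalW_eq_of_chk 9 (by decide)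
  rw [certshape] at e
  rw [e]
  exact cw_mem _ (by intro f hf; fin_cases hf; exacts [xmemW 0])

theorem cert_0_12 :
    (evalW [1,0,2,0])⁻¹ * (gen 0 * evalW [1,2,0]) ∈ K := by
  have e : evalW (([1,0,2,0] : W).reverse ++ 0 :: [1,2,0]) =
      evalW (cw [(true, xw6 0, [2,0])]) := evalW_eq_of_chk 9 (by decide)
  rw [certshape] at e
  rw [e]
  exact cw_mem _ (by intro f hf; fin_cases hf; exacts [xmemW 0])

theorem cert_0_13 :
    (evalW [1,2,0])⁻¹ * (gen 0 * evalW [1,0,2,0]) ∈ K := by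
  have e : evalW (([1,2,0] : W).reverse ++ 0 :: [1,0,2,0]) =
      evalW (cw [(true, xw6 0, [0,2,0])]) := evalW_eq_of_chk 9 (by decide)
  rw [certshape] at e
  rw [e]
  exact cw_mem _ (by intro f hf; fin_cases hf; exacts [xmemW 0])

theorem cert_0_14 :
    (evalW [1,0,2,0,2])⁻¹ * (gen 0 * evalW [1,2,0,2]) ∈ K := by
  have e : evalW (([1,0,2,0,2] : W).reverse ++ 0 :: [1,2,0,2]) =
      evalW (cw [(true, xw6 0, [2,0,2])]) := evalW_eq_of_chk 9 (by decide)
  rw [certshape] at e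
  rw [e]
  exact cw_mem _ (by intro f hf; fin_cases hf; exacts [xmemW 0])

theorem cert_0_15 :
    (evalW [1,2,0,2])⁻¹ * (gen 0 * evalW [1,0,2,0,2]) ∈ K := by
  have e : evalW (([1,2,0,2] : W).reverse ++ 0 :: [1,0,2,0,2]) =
      evalW (cw [(true, xw6 0, [0,2,0,2])]) := evalW_eq_of_chk 9 (by decide)
  rw [certshape] at e
  rw [e]
  exact cw_mem _ (by intro f hf; fin_cases hf; exacts [xmemW 0])

theorem cert_1_0 :
    (evalW [1])⁻¹ * (gen 1 * evalW []) ∈ K := by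
  have e : evalW (([1] : W).reverse ++ 1 :: []) =
      evalW (cw []) := evalW_eq_of_chk 9 (by decide)
  rw [certshape] at e
  rw [e]
  exact cw_mem _ (by intro f hf; simp at hf)

theorem cert_1_1 :
    (evalW [1,0])⁻¹ * (gen 1 * evalW [0]) ∈ K := by
  have e : evalW (([1,0] : W).reverse ++ 1 :: [0]) =
      evalW (cw []) := evalW_eq_of_chk 9 (by decide)
  rw [certshape] at e
  rw [e]
  exact cw_mem _ (by intro f hf; simp at hf)

theorem cert_1_2 :
    (evalW [1,2])⁻¹ * (gen 1 * evalW [2]) ∈ K := by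
  have e : evalW (([1,2] : W).reverse ++ 1 :: [2]) =
      evalW (cw []) := evalW_eq_of_chk 9 (by decide)
  rw [certshape] at e
  rw [e]
  exact cw_mem _ (by intro f hf; simp at hf)

theorem cert_1_3 :
    (evalW [1,0,2])⁻¹ * (gen 1 * evalW [0,2]) ∈ K := by
  have e : evalW (([1,0,2] : W).reverse ++ 1 :: [0,2]) =
      evalW (cw []) := evalW_eq_of_chk 9 (by decide)
  rw [certshape] at e
  rw [e]
  exact cw_mem _ (by intro f hf; simp at hf)

theorem cert_1_4 :
    (evalW [1,2,0])⁻¹ * (gen 1 * evalW [2,0]) ∈ K := by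
  have e : evalW (([1,2,0] : W).reverse ++ 1 :: [2,0]) =
      evalW (cw []) := evalW_eq_of_chk 9 (by decide)
  rw [certshape] at e
  rw [e]
  exact cw_mem _ (by intro f hf; simp at hf)

theorem cert_1_5 :
    (evalW [1,0,2,0])⁻¹ * (gen 1 * evalW [0,2,0]) ∈ K := by
  have e : evalW (([1,0,2,0] : W).reverse ++ 1 :: [0,2,0]) =
      evalW (cw []) := evalW_eq_of_chk 9 (by decide)
  rw [certshape] at e
  rw [e]
  exact cw_mem _ (by intro f hf; simp at hf)

theorem cert_1_6 :
    (evalW [1,2,0,2])⁻¹ * (gen 1 * evalW [2,0,2]) ∈ K := by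
  have e : evalW (([1,2,0,2] : W).reverse ++ 1 :: [2,0,2]) =
      evalW (cw []) := evalW_eq_of_chk 9 (by decide)
  rw [certshape] at e
  rw [e]
  exact cw_mem _ (by intro f hf; simp at hf)

theorem cert_1_7 :
    (evalW [1,0,2,0,2])⁻¹ * (gen 1 * evalW [0,2,0,2]) ∈ K := by
  have e : evalW (([1,0,2,0,2] : W).reverse ++ 1 :: [0,2,0,2]) =
      evalW (cw []) := evalW_eq_of_chk 9 (by decide)
  rw [certshape] at e
  rw [e]
  exact cw_mem _ (by intro f hf; simp at hf)

theorem cert_1_8 :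
    (evalW [])⁻¹ * (gen 1 * evalW [1]) ∈ K := by
  have e : evalW (([] : W).reverse ++ 1 :: [1]) =
      evalW (cw []) := evalW_eq_of_chk 9 (by decide)
  rw [certshape] at e
  rw [e]
  exact cw_mem _ (by intro f hf; simp at hf)

theorem cert_1_9 :
    (evalW [0])⁻¹ * (gen 1 * evalW [1,0]) ∈ K := by
  have e : evalW (([0] : W).reverse ++ 1 :: [1,0]) =
      evalW (cw []) := evalW_eq_of_chk 9 (by decide)
  rw [certshape] at e
  rw [e]
  exact cw_mem _ (by intro f hf; simp at hf)

theorem cert_1_10 :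
    (evalW [2])⁻¹ * (gen 1 * evalW [1,2]) ∈ K := by
  have e : evalW (([2] : W).reverse ++ 1 :: [1,2]) =
      evalW (cw []) := evalW_eq_of_chk 9 (by decide)
  rw [certshape] at e
  rw [e]
  exact cw_mem _ (by intro f hf; simp at hf)

theorem cert_1_11 :
    (evalW [0,2])⁻¹ * (gen 1 * evalW [1,0,2]) ∈ K := by
  have e : evalW (([0,2] : W).reverse ++ 1 :: [1,0,2]) =
      evalW (cw []) := evalW_eq_of_chk 9 (by decide)
  rw [certshape] at e
  rw [e]
  exact cw_mem _ (by intro f hf; simp at hf)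

theorem cert_1_12 :
    (evalW [2,0])⁻¹ * (gen 1 * evalW [1,2,0]) ∈ K := by
  have e : evalW (([2,0] : W).reverse ++ 1 :: [1,2,0]) =
      evalW (cw []) := evalW_eq_of_chk 9 (by decide)
  rw [certshape] at e
  rw [e]
  exact cw_mem _ (by intro f hf; simp at hf)

theorem cert_1_13 :
    (evalW [0,2,0])⁻¹ * (gen 1 * evalW [1,0,2,0]) ∈ K := by
  have e : evalW (([0,2,0] : W).reverse ++ 1 :: [1,0,2,0]) =
      evalW (cw []) := evalW_eq_of_chk 9 (by decide)
  rw [certshape] at e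
  rw [e]
  exact cw_mem _ (by intro f hf; simp at hf)

theorem cert_1_14 :
    (evalW [2,0,2])⁻¹ * (gen 1 * evalW [1,2,0,2]) ∈ K := by
  have e : evalW (([2,0,2] : W).reverse ++ 1 :: [1,2,0,2]) =
      evalW (cw []) := evalW_eq_of_chk 9 (by decide)
  rw [certshape] at e
  rw [e]
  exact cw_mem _ (by intro f hf; simp at hf)

theorem cert_1_15 :
    (evalW [0,2,0,2])⁻¹ * (gen 1 * evalW [1,0,2,0,2]) ∈ K := by
  have e : evalW (([0,2,0,2] : W).reverse ++ 1 :: [1,0,2,0,2]) =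
      evalW (cw []) := evalW_eq_of_chk 9 (by decide)
  rw [certshape] at e
  rw [e]
  exact cw_mem _ (by intro f hf; simp at hf)

theorem cert_2_0 :
    (evalW [2])⁻¹ * (gen 2 * evalW []) ∈ K := by
  have e : evalW (([2] : W).reverse ++ 2 :: []) =
      evalW (cw []) := evalW_eq_of_chk 9 (by decide)
  rw [certshape] at e
  rw [e]
  exact cw_mem _ (by intro f hf; simp at hf)

theorem cert_2_1 :
    (evalW [2,0])⁻¹ * (gen 2 * evalW [0]) ∈ K := by
  have e : evalW (([2,0] : W).reverse ++ 2 :: [0]) =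
      evalW (cw []) := evalW_eq_of_chk 9 (by decide)
  rw [certshape] at e
  rw [e]
  exact cw_mem _ (by intro f hf; simp at hf)

theorem cert_2_2 :
    (evalW [])⁻¹ * (gen 2 * evalW [2]) ∈ K := by
  have e : evalW (([] : W).reverse ++ 2 :: [2]) =
      evalW (cw []) := evalW_eq_of_chk 9 (by decide)
  rw [certshape] at e
  rw [e]
  exact cw_mem _ (by intro f hf; simp at hf)

theorem cert_2_3 :
    (evalW [2,0,2])⁻¹ * (gen 2 * evalW [0,2]) ∈ K := by
  have e : evalW (([2,0,2] : W).reverse ++ 2 :: [0,2]) =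
      evalW (cw []) := evalW_eq_of_chk 9 (by decide)
  rw [certshape] at e
  rw [e]
  exact cw_mem _ (by intro f hf; simp at hf)

theorem cert_2_4 :
    (evalW [0])⁻¹ * (gen 2 * evalW [2,0]) ∈ K := by
  have e : evalW (([0] : W).reverse ++ 2 :: [2,0]) =
      evalW (cw []) := evalW_eq_of_chk 9 (by decide)
  rw [certshape] at e
  rw [e]
  exact cw_mem _ (by intro f hf; simp at hf)

theorem cert_2_5 :
    (evalW [0,2,0,2])⁻¹ * (gen 2 * evalW [0,2,0]) ∈ K := by
  have e : evalW (([0,2,0,2] : W).reverse ++ 2 :: [0,2,0]) =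
      evalW (cw [(true, xw6 5, [0])]) := evalW_eq_of_chk 9 (by decide)
  rw [certshape] at e
  rw [e]
  exact cw_mem _ (by intro f hf; fin_cases hf; exacts [xmemW 5])

theorem cert_2_6 :
    (evalW [0,2])⁻¹ * (gen 2 * evalW [2,0,2]) ∈ K := by
  have e : evalW (([0,2] : W).reverse ++ 2 :: [2,0,2]) =
      evalW (cw []) := evalW_eq_of_chk 9 (by decide)
  rw [certshape] at e
  rw [e]
  exact cw_mem _ (by intro f hf; simp at hf)

theorem cert_2_7 :
    (evalW [0,2,0])⁻¹ * (gen 2 * evalW [0,2,0,2]) ∈ K := by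
  have e : evalW (([0,2,0] : W).reverse ++ 2 :: [0,2,0,2]) =
      evalW (cw [(true, xw6 5, [])]) := evalW_eq_of_chk 9 (by decide)
  rw [certshape] at e
  rw [e]
  exact cw_mem _ (by intro f hf; fin_cases hf; exacts [xmemW 5])

theorem cert_2_8 :
    (evalW [1,2])⁻¹ * (gen 2 * evalW [1]) ∈ K := by
  have e : evalW (([1,2] : W).reverse ++ 2 :: [1]) =
      evalW (cw [(false, xw6 1, [])]) := evalW_eq_of_chk 9 (by decide)
  rw [certshape] at e
  rw [e]
  exact cw_mem _ (by intro f hf; fin_cases hf; exacts [xmemW 1])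

theorem cert_2_9 :
    (evalW [1,2,0])⁻¹ * (gen 2 * evalW [1,0]) ∈ K := by
  have e : evalW (([1,2,0] : W).reverse ++ 2 :: [1,0]) =
      evalW (cw [(false, xw6 1, [0])]) := evalW_eq_of_chk 9 (by decide)
  rw [certshape] at e
  rw [e]
  exact cw_mem _ (by intro f hf; fin_cases hf; exacts [xmemW 1])

theorem cert_2_10 :
    (evalW [1])⁻¹ * (gen 2 * evalW [1,2]) ∈ K := by
  have e : evalW (([1] : W).reverse ++ 2 :: [1,2]) =
      evalW (cw [(false, xw6 1, [2])]) := evalW_eq_of_chk 9 (by decide)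
  rw [certshape] at e
  rw [e]
  exact cw_mem _ (by intro f hf; fin_cases hf; exacts [xmemW 1])

theorem cert_2_11 :
    (evalW [1,2,0,2])⁻¹ * (gen 2 * evalW [1,0,2]) ∈ K := by
  have e : evalW (([1,2,0,2] : W).reverse ++ 2 :: [1,0,2]) =
      evalW (cw [(false, xw6 1, [0,2])]) := evalW_eq_of_chk 9 (by decide)
  rw [certshape] at e
  rw [e]
  exact cw_mem _ (by intro f hf; fin_cases hf; exacts [xmemW 1])

theorem cert_2_12 :
    (evalW [1,0])⁻¹ * (gen 2 * evalW [1,2,0]) ∈ K := by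
  have e : evalW (([1,0] : W).reverse ++ 2 :: [1,2,0]) =
      evalW (cw [(false, xw6 1, [2,0])]) := evalW_eq_of_chk 9 (by decide)
  rw [certshape] at e
  rw [e]
  exact cw_mem _ (by intro f hf; fin_cases hf; exacts [xmemW 1])

theorem cert_2_13 :
    (evalW [1,0,2,0,2])⁻¹ * (gen 2 * evalW [1,0,2,0]) ∈ K := by
  have e : evalW (([1,0,2,0,2] : W).reverse ++ 2 :: [1,0,2,0]) =
      evalW (cw [(true, xw6 5, [0]), (false, xw6 1, [0,2,0])]) := evalW_eq_of_chk 9 (by decide)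
  rw [certshape] at e
  rw [e]
  exact cw_mem _ (by intro f hf; fin_cases hf; exacts [xmemW 5, xmemW 1])

theorem cert_2_14 :
    (evalW [1,0,2])⁻¹ * (gen 2 * evalW [1,2,0,2]) ∈ K := by
  have e : evalW (([1,0,2] : W).reverse ++ 2 :: [1,2,0,2]) =
      evalW (cw [(false, xw6 1, [2,0,2])]) := evalW_eq_of_chk 9 (by decide)
  rw [certshape] at e
  rw [e]
  exact cw_mem _ (by intro f hf; fin_cases hf; exacts [xmemW 1])

theorem cert_2_15 :
    (evalW [1,0,2,0])⁻¹ * (gen 2 * evalW [1,0,2,0,2]) ∈ K := by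
  have e : evalW (([1,0,2,0] : W).reverse ++ 2 :: [1,0,2,0,2]) =
      evalW (cw [(true, xw6 5, []), (false, xw6 1, [0,2,0,2])]) := evalW_eq_of_chk 9 (by decide)
  rw [certshape] at e
  rw [e]
  exact cw_mem _ (by intro f hf; fin_cases hf; exacts [xmemW 5, xmemW 1])

theorem cert_3_0 :
    (evalW [1,2])⁻¹ * (gen 3 * evalW []) ∈ K := by
  have e : evalW (([1,2] : W).reverse ++ 3 :: []) =
      evalW (cw [(false, xw6 1, []), (true, xw6 4, [])]) := evalW_eq_of_chk 9 (by decide)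
  rw [certshape] at e
  rw [e]
  exact cw_mem _ (by intro f hf; fin_cases hf; exacts [xmemW 1, xmemW 4])

theorem cert_3_1 :
    (evalW [1,2,0])⁻¹ * (gen 3 * evalW [0]) ∈ K := by
  have e : evalW (([1,2,0] : W).reverse ++ 3 :: [0]) =
      evalW (cw [(false, xw6 1, [0]), (true, xw6 4, [0])]) := evalW_eq_of_chk 9 (by decide)
  rw [certshape] at e
  rw [e]
  exact cw_mem _ (by intro f hf; fin_cases hf; exacts [xmemW 1, xmemW 4])

theorem cert_3_2 :
    (evalW [1])⁻¹ * (gen 3 * evalW [2]) ∈ K := by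
  have e : evalW (([1] : W).reverse ++ 3 :: [2]) =
      evalW (cw [(false, xw6 1, [2]), (true, xw6 4, [2])]) := evalW_eq_of_chk 9 (by decide)
  rw [certshape] at e
  rw [e]
  exact cw_mem _ (by intro f hf; fin_cases hf; exacts [xmemW 1, xmemW 4])

theorem cert_3_3 :
    (evalW [1,2,0,2])⁻¹ * (gen 3 * evalW [0,2]) ∈ K := by
  have e : evalW (([1,2,0,2] : W).reverse ++ 3 :: [0,2]) =
      evalW (cw [(false, xw6 1, [0,2]), (true, xw6 4, [0,2])]) := evalW_eq_of_chk 9 (by decide)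
  rw [certshape] at e
  rw [e]
  exact cw_mem _ (by intro f hf; fin_cases hf; exacts [xmemW 1, xmemW 4])

theorem cert_3_4 :
    (evalW [1,0])⁻¹ * (gen 3 * evalW [2,0]) ∈ K := by
  have e : evalW (([1,0] : W).reverse ++ 3 :: [2,0]) =
      evalW (cw [(false, xw6 1, [2,0]), (true, xw6 4, [2,0])]) := evalW_eq_of_chk 9 (by decide)
  rw [certshape] at e
  rw [e]
  exact cw_mem _ (by intro f hf; fin_cases hf; exacts [xmemW 1, xmemW 4])

theorem cert_3_5 :
    (evalW [1,0,2,0,2])⁻¹ * (gen 3 * evalW [0,2,0]) ∈ K := by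
  have e : evalW (([1,0,2,0,2] : W).reverse ++ 3 :: [0,2,0]) =
      evalW (cw [(true, xw6 5, [0]), (false, xw6 1, [0,2,0]), (true, xw6 4, [0,2,0])]) := evalW_eq_of_chk 9 (by decide)
  rw [certshape] at e
  rw [e]
  exact cw_mem _ (by intro f hf; fin_cases hf; exacts [xmemW 5, xmemW 1, xmemW 4])

theorem cert_3_6 :
    (evalW [1,0,2])⁻¹ * (gen 3 * evalW [2,0,2]) ∈ K := by
  have e : evalW (([1,0,2] : W).reverse ++ 3 :: [2,0,2]) =
      evalW (cw [(false, xw6 1, [2,0,2]), (true, xw6 4, [2,0,2])]) := evalW_eq_of_chk 9 (by decide)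
  rw [certshape] at e
  rw [e]
  exact cw_mem _ (by intro f hf; fin_cases hf; exacts [xmemW 1, xmemW 4])

theorem cert_3_7 :
    (evalW [1,0,2,0])⁻¹ * (gen 3 * evalW [0,2,0,2]) ∈ K := by
  have e : evalW (([1,0,2,0] : W).reverse ++ 3 :: [0,2,0,2]) =
      evalW (cw [(true, xw6 5, []), (false, xw6 1, [0,2,0,2]), (true, xw6 4, [0,2,0,2])]) := evalW_eq_of_chk 9 (by decide)
  rw [certshape] at e
  rw [e]
  exact cw_mem _ (by intro f hf; fin_cases hf; exacts [xmemW 5, xmemW 1, xmemW 4])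

theorem cert_3_8 :
    (evalW [2])⁻¹ * (gen 3 * evalW [1]) ∈ K := by
  have e : evalW (([2] : W).reverse ++ 3 :: [1]) =
      evalW (cw [(true, xw6 4, [1])]) := evalW_eq_of_chk 9 (by decide)
  rw [certshape] at e
  rw [e]
  exact cw_mem _ (by intro f hf; fin_cases hf; exacts [xmemW 4])

theorem cert_3_9 :
    (evalW [2,0])⁻¹ * (gen 3 * evalW [1,0]) ∈ K := by
  have e : evalW (([2,0] : W).reverse ++ 3 :: [1,0]) =
      evalW (cw [(true, xw6 4, [1,0])]) := evalW_eq_of_chk 9 (by decide)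
  rw [certshape] at e
  rw [e]
  exact cw_mem _ (by intro f hf; fin_cases hf; exacts [xmemW 4])

theorem cert_3_10 :
    (evalW [])⁻¹ * (gen 3 * evalW [1,2]) ∈ K := by
  have e : evalW (([] : W).reverse ++ 3 :: [1,2]) =
      evalW (cw [(true, xw6 4, [1,2])]) := evalW_eq_of_chk 9 (by decide)
  rw [certshape] at e
  rw [e]
  exact cw_mem _ (by intro f hf; fin_cases hf; exacts [xmemW 4])

theorem cert_3_11 :
    (evalW [2,0,2])⁻¹ * (gen 3 * evalW [1,0,2]) ∈ K := by
  have e : evalW (([2,0,2] : W).reverse ++ 3 :: [1,0,2]) =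
      evalW (cw [(true, xw6 4, [1,0,2])]) := evalW_eq_of_chk 9 (by decide)
  rw [certshape] at e
  rw [e]
  exact cw_mem _ (by intro f hf; fin_cases hf; exacts [xmemW 4])

theorem cert_3_12 :
    (evalW [0])⁻¹ * (gen 3 * evalW [1,2,0]) ∈ K := by
  have e : evalW (([0] : W).reverse ++ 3 :: [1,2,0]) =
      evalW (cw [(true, xw6 4, [1,2,0])]) := evalW_eq_of_chk 9 (by decide)
  rw [certshape] at e
  rw [e]
  exact cw_mem _ (by intro f hf; fin_cases hf; exacts [xmemW 4])

theorem cert_3_13 :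
    (evalW [0,2,0,2])⁻¹ * (gen 3 * evalW [1,0,2,0]) ∈ K := by
  have e : evalW (([0,2,0,2] : W).reverse ++ 3 :: [1,0,2,0]) =
      evalW (cw [(true, xw6 5, [0]), (true, xw6 4, [1,0,2,0])]) := evalW_eq_of_chk 9 (by decide)
  rw [certshape] at e
  rw [e]
  exact cw_mem _ (by intro f hf; fin_cases hf; exacts [xmemW 5, xmemW 4])

theorem cert_3_14 :
    (evalW [0,2])⁻¹ * (gen 3 * evalW [1,2,0,2]) ∈ K := by
  have e : evalW (([0,2] : W).reverse ++ 3 :: [1,2,0,2]) =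
      evalW (cw [(true, xw6 4, [1,2,0,2])]) := evalW_eq_of_chk 9 (by decide)
  rw [certshape] at e
  rw [e]
  exact cw_mem _ (by intro f hf; fin_cases hf; exacts [xmemW 4])

theorem cert_3_15 :
    (evalW [0,2,0])⁻¹ * (gen 3 * evalW [1,0,2,0,2]) ∈ K := by
  have e : evalW (([0,2,0] : W).reverse ++ 3 :: [1,0,2,0,2]) =
      evalW (cw [(true, xw6 5, []), (true, xw6 4, [1,0,2,0,2])]) := evalW_eq_of_chk 9 (by decide)
  rw [certshape] at e
  rw [e]
  exact cw_mem _ (by intro f hf; fin_cases hf; exacts [xmemW 5, xmemW 4])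

theorem cstep : ∀ i : Fin 4, ∀ p ∈ T16, ∃ q ∈ T16, (evalW q.1)⁻¹ * (gen i * evalW p.1) ∈ K := by
  intro i p hp
  fin_cases i <;> fin_cases hp
  · exact ⟨([0],14570689), by decide, cert_0_0⟩
  · exact ⟨([],16434824), by decide, cert_0_1⟩
  · exact ⟨([0,2],14054467), by decide, cert_0_2⟩
  · exact ⟨([2],15918602), by decide, cert_0_3⟩
  · exact ⟨([0,2,0],12305048), by decide, cert_0_4⟩
  · exact ⟨([2,0],10440913), by decide, cert_0_5⟩
  · exact ⟨([0,2,0,2],11788826), by decide, cert_0_6⟩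
  · exact ⟨([2,0,2],9924691), by decide, cert_0_7⟩
  · exact ⟨([1,0],13923427), by decide, cert_0_8⟩
  · exact ⟨([1],12288668), by decide, cert_0_9⟩
  · exact ⟨([1,0,2],14439649), by decide, cert_0_10⟩
  · exact ⟨([1,2],10740506), by decide, cert_0_11⟩
  · exact ⟨([1,0,2,0],16418444), by decide, cert_0_12⟩
  · exact ⟨([1,2,0],1538131), by decide, cert_0_13⟩
  · exact ⟨([1,0,2,0,2],14870282), by decide, cert_0_14⟩
  · exact ⟨([1,2,0,2],2054353), by decide, cert_0_15⟩
  · exact ⟨([1],12288668), by decide, cert_1_0⟩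
  · exact ⟨([1,0],13923427), by decide, cert_1_1⟩
  · exact ⟨([1,2],10740506), by decide, cert_1_2⟩
  · exact ⟨([1,0,2],14439649), by decide, cert_1_3⟩
  · exact ⟨([1,2,0],1538131), by decide, cert_1_4⟩
  · exact ⟨([1,0,2,0],16418444), by decide, cert_1_5⟩
  · exact ⟨([1,2,0,2],2054353), by decide, cert_1_6⟩
  · exact ⟨([1,0,2,0,2],14870282), by decide, cert_1_7⟩
  · exact ⟨([],16434824), by decide, cert_1_8⟩
  · exact ⟨([0],14570689), by decide, cert_1_9⟩
  · exact ⟨([2],15918602), by decide, cert_1_10⟩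
  · exact ⟨([0,2],14054467), by decide, cert_1_11⟩
  · exact ⟨([2,0],10440913), by decide, cert_1_12⟩
  · exact ⟨([0,2,0],12305048), by decide, cert_1_13⟩
  · exact ⟨([2,0,2],9924691), by decide, cert_1_14⟩
  · exact ⟨([0,2,0,2],11788826), by decide, cert_1_15⟩
  · exact ⟨([2],15918602), by decide, cert_2_0⟩
  · exact ⟨([2,0],10440913), by decide, cert_2_1⟩
  · exact ⟨([],16434824), by decide, cert_2_2⟩
  · exact ⟨([2,0,2],9924691), by decide, cert_2_3⟩
  · exact ⟨([0],14570689), by decide, cert_2_4⟩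
  · exact ⟨([0,2,0,2],11788826), by decide, cert_2_5⟩
  · exact ⟨([0,2],14054467), by decide, cert_2_6⟩
  · exact ⟨([0,2,0],12305048), by decide, cert_2_7⟩
  · exact ⟨([1,2],10740506), by decide, cert_2_8⟩
  · exact ⟨([1,2,0],1538131), by decide, cert_2_9⟩
  · exact ⟨([1],12288668), by decide, cert_2_10⟩
  · exact ⟨([1,2,0,2],2054353), by decide, cert_2_11⟩
  · exact ⟨([1,0],13923427), by decide, cert_2_12⟩
  · exact ⟨([1,0,2,0,2],14870282), by decide, cert_2_13⟩
  · exact ⟨([1,0,2],14439649), by decide, cert_2_14⟩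
  · exact ⟨([1,0,2,0],16418444), by decide, cert_2_15⟩
  · exact ⟨([1,2],10740506), by decide, cert_3_0⟩
  · exact ⟨([1,2,0],1538131), by decide, cert_3_1⟩
  · exact ⟨([1],12288668), by decide, cert_3_2⟩
  · exact ⟨([1,2,0,2],2054353), by decide, cert_3_3⟩
  · exact ⟨([1,0],13923427), by decide, cert_3_4⟩
  · exact ⟨([1,0,2,0,2],14870282), by decide, cert_3_5⟩
  · exact ⟨([1,0,2],14439649), by decide, cert_3_6⟩
  · exact ⟨([1,0,2,0],16418444), by decide, cert_3_7⟩
  · exact ⟨([2],15918602), by decide, cert_3_8⟩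
  · exact ⟨([2,0],10440913), by decide, cert_3_9⟩
  · exact ⟨([],16434824), by decide, cert_3_10⟩
  · exact ⟨([2,0,2],9924691), by decide, cert_3_11⟩
  · exact ⟨([0],14570689), by decide, cert_3_12⟩
  · exact ⟨([0,2,0,2],11788826), by decide, cert_3_13⟩
  · exact ⟨([0,2],14054467), by decide, cert_3_14⟩
  · exact ⟨([0,2,0],12305048), by decide, cert_3_15⟩

theorem coset_list : ∀ l : List (Perm V), (∀ y ∈ l, ∃ i : Fin 4, y = gen i) →
    ∃ p ∈ T16, (evalW p.1)⁻¹ * l.prod ∈ K := by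
  intro l
  induction l with
  | nil =>
    intro _
    exact ⟨([], idN), fT_id, by simpa using one_mem K⟩
  | cons s l ih =>
    intro hl
    obtain ⟨p, hp, hk⟩ := ih (fun y hy => hl y (List.mem_cons_of_mem _ hy))
    obtain ⟨i, hi⟩ := hl s (List.mem_cons_self)
    subst hi
    obtain ⟨q, hq, hcert⟩ := cstep i p hp
    refine ⟨q, hq, ?_⟩
    rw [List.prod_cons]
    have e : (evalW q.1)⁻¹ * (gen i * l.prod) =
        ((evalW q.1)⁻¹ * (gen i * evalW p.1)) * ((evalW p.1)⁻¹ * l.prod) := by group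
    rw [e]
    exact mul_mem hcert hk

theorem coset {g : Perm V} (hg : g ∈ G) : ∃ p ∈ T16, (evalW p.1)⁻¹ * g ∈ K := by
  obtain ⟨l, hl, rfl⟩ := exists_word hg
  exact coset_list l hl

theorem stabG3_le_K : stabG 3 ≤ K := by
  intro g hg
  obtain ⟨hgG, hgs⟩ := Subgroup.mem_inf.mp hg
  obtain ⟨p, hp, hk⟩ := coset hgG
  obtain ⟨q, hq, hA, _⟩ := KActs hk
  have hgid : Acts3 g idN := fun v hv => by
    rw [show g v = v from hgs v hv, tapp_idN hv]
  have hT : Acts3 (evalW p.1) p.2 := fT_acts p hp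
  have hg2 : Acts3 g (compT p.2 q.1) := by
    have h2 := Acts3_mul hT hA
    rw [show evalW p.1 * ((evalW p.1)⁻¹ * g) = g from by group] at h2
    exact h2
  have huniq := Acts3_unique hgid hg2 (by norm_num [idN]) (compT_lt _ _)
  rcases fT_sep p hp q hq with h0 | hne
  · rw [h0] at hk
    simpa using hk
  · exact absurd huniq.symm hne
/-! ### length preservation and finite index of level stabilizers -/

theorem actA_len (v : V) : (actA v).length = v.length := by
  cases v <;> simp [actA]

theorem act_len3 (v : V) :
    (actB v).length = v.length ∧ (actC v).length = v.length ∧ (actD v).length = v.length := by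
  induction v with
  | nil => exact ⟨rfl, rfl, rfl⟩
  | cons x w ih =>
    cases x <;>
      exact ⟨by simp [actB, actC, actD, ih.1, ih.2.1, ih.2.2, actA_len w],
        by simp [actB, actC, actD, ih.1, ih.2.1, ih.2.2, actA_len w],
        by simp [actB, actC, actD, ih.1, ih.2.1, ih.2.2, actA_len w]⟩

theorem lenG {g : Perm V} (hg : g ∈ G) : ∀ v : V, (g v).length = v.length := by
  refine Subgroup.closure_induction (p := fun g _ => ∀ v : V, (g v).length = v.length)
    (fun x hx => ?_) (fun v => by simp)
    (fun x y _ _ hx hy v => by rw [Perm.mul_apply, hx, hy])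
    (fun x _ hx v => by
      have := hx (x⁻¹ v)
      rw [show x (x⁻¹ v) = v from Equiv.apply_symm_apply x v] at this
      exact this.symm) hg
  rcases hx with h | h | h | h
  · subst h; intro v; rw [coe_a]; exact actA_len v
  · subst h; intro v; rw [coe_b]; exact (act_len3 v).1
  · subst h; intro v; rw [coe_c]; exact (act_len3 v).2.1
  · have h' : x = d := by simpa using h
    subst h'; intro v; rw [coe_d]; exact (act_len3 v).2.2

def lvl (m : ℕ) : Type := {v : V // v.length = m}

instance lvl_finite (m : ℕ) : Finite (lvl m) := by
  refine Finite.of_injective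
    (fun v : lvl m => (fun i : Fin m => v.1.get ⟨i.1, by rw [v.2]; exact i.2⟩ : Fin m → Bool)) ?_
  intro v w h
  apply Subtype.ext
  apply List.ext_get (by rw [v.2, w.2])
  intro i h1 h2
  have := congrFun h ⟨i, by rw [← v.2]; exact h1⟩
  simpa using this

def Phi (m : ℕ) : ↥G →* Perm (lvl m) where
  toFun g :=
    { toFun := fun v => ⟨g.1 v.1, by rw [lenG g.2]; exact v.2⟩
      invFun := fun v => ⟨g.1⁻¹ v.1, by rw [lenG (inv_mem g.2)]; exact v.2⟩
      left_inv := fun v => Subtype.ext (by simp)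
      right_inv := fun v => Subtype.ext (by simp) }
  map_one' := Equiv.ext fun v => Subtype.ext rfl
  map_mul' g h := Equiv.ext fun v => Subtype.ext rfl

theorem ker_Phi (m : ℕ) : (stabLevel m).subgroupOf G = (Phi m).ker := by
  ext g
  rw [Subgroup.mem_subgroupOf, MonoidHom.mem_ker]
  constructor
  · intro h
    apply Equiv.ext
    intro v
    exact Subtype.ext (h v.1 v.2)
  · intro h v hv
    have := congrArg (fun e : Perm (lvl m) => (e ⟨v, hv⟩).1) h
    exact this

theorem stab_relindex (m : ℕ) : (stabLevel m).relIndex G ≠ 0 := by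
  have h1 : (stabLevel m).relIndex G = (Phi m).ker.index :=
    congrArg Subgroup.index (ker_Phi m)
  rw [h1, Subgroup.index_ker]
  rw [Nat.card_ne_zero]
  exact ⟨⟨⟨1, one_mem _⟩⟩, inferInstance⟩

theorem stabG_relindex (m : ℕ) : (stabG m).relIndex G ≠ 0 := by
  have he : (stabG m).subgroupOf G = (stabLevel m).subgroupOf G := by
    rw [stabG, Subgroup.subgroupOf, Subgroup.comap_inf, ← Subgroup.subgroupOf,
      ← Subgroup.subgroupOf, Subgroup.subgroupOf_self, top_inf_eq]
  have : (stabG m).relIndex G = (stabLevel m).relIndex G := congrArg Subgroup.index he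
  rw [this]
  exact stab_relindex m

/-! ### the tower Xⁿ*K -/

theorem X0 : XstarSub 0 K = K := by
  apply le_antisymm
  · apply (Subgroup.closure_le _).mpr
    rintro p ⟨v, k, hlen, hk, rfl⟩
    rw [List.length_eq_zero_iff.mp hlen, vstar_nil]
    exact hk
  · intro k hk
    exact Subgroup.subset_closure ⟨[], k, rfl, hk, (vstar_nil k).symm⟩

theorem Xstep (n : ℕ) (x : Bool) {h : Perm V} (hh : h ∈ XstarSub n K) :
    vstar [x] h ∈ XstarSub (n + 1) K := by
  refine Subgroup.closure_induction (p := fun h _ => vstar [x] h ∈ XstarSub (n + 1) K)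
    (fun y hy => ?_)
    (by refine (?_ : vstar [x] 1 ∈ XstarSub (n+1) K); rw [vstar_one]; exact one_mem _)
    (fun u w _ _ hu hw => by
      show vstar [x] (u * w) ∈ XstarSub (n+1) K
      rw [vstar_mul]; exact mul_mem hu hw)
    (fun u _ hu => by
      show vstar [x] u⁻¹ ∈ XstarSub (n+1) K
      rw [vstar_inv]; exact inv_mem hu) hh
  obtain ⟨v, k, hlen, hk, rfl⟩ := hy
  rw [← vstar_cons]
  exact Subgroup.subset_closure ⟨x :: v, k, by simp [hlen], hk, rfl⟩

theorem stab_le_X : ∀ n : ℕ, stabG (n + 3) ≤ XstarSub n K := by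
  intro n
  induction n with
  | zero => rw [X0]; exact stabG3_le_K
  | succ n ih =>
    intro g hg
    obtain ⟨hgG, hgs⟩ := Subgroup.mem_inf.mp hg
    obtain ⟨g0, g1, h0G, h1G, he | he⟩ := decomp hgG
    · -- g = pairPerm g0 g1
      have hst : ∀ x : Bool, ∀ w : V, w.length = n + 3 → (if x then g1 w else g0 w) = w := by
        intro x w hw
        have hv : (x :: w).length = n + 1 + 3 := by simp [hw]
        have := hgs (x :: w) hv
        rw [he, pairPerm_apply_cons] at this
        exact (List.cons.injEq _ _ _ _ ▸ this).2
      have h0s : g0 ∈ stabG (n + 3) := Subgroup.mem_inf.mpr ⟨h0G, fun w hw => by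
        have := hst false w hw; simpa using this⟩
      have h1s : g1 ∈ stabG (n + 3) := Subgroup.mem_inf.mpr ⟨h1G, fun w hw => by
        have := hst true w hw; simpa using this⟩
      rw [he, pairPerm]
      exact mul_mem (Xstep n false (ih h0s)) (Xstep n true (ih h1s))
    · exfalso
      have hv : (false :: List.replicate (n + 3) false : V).length = n + 1 + 3 := by
        simp
      have := hgs _ hv
      rw [he, Perm.mul_apply] at this
      rw [show a (false :: List.replicate (n + 3) false : V) =
        (true :: List.replicate (n + 3) false : V) from rfl] at this
      rw [pairPerm_apply_cons] at this
      simp at this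

theorem claim2 (n : ℕ) : (XstarSub n K).relIndex G ≠ 0 := by
  intro h0
  have hdvd := Subgroup.relIndex_dvd_of_le_left G (stab_le_X n)
  rw [h0] at hdvd
  exact stabG_relindex (n + 3) (Nat.eq_zero_of_zero_dvd hdvd)
/-- **Proposition.** `G` is regular branch over `K`: `X*K ≤ K` and `Xⁿ*K` has finite
index in `G` for every `n ≥ 0`; moreover `K` contains `Stab_G(3)`. -/
theorem stmt0 :
    XstarSub 1 K ≤ K ∧ (∀ n : ℕ, (XstarSub n K).relIndex G ≠ 0) ∧ stabG 3 ≤ K :=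
  ⟨claim1, claim2, stabG3_le_K⟩
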